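/- arXiv:1707.02887 — 10 statements merged into one kernel-verified Lean document; each statement's English description precedes it below -/
import Mathlib

section
/- For all positive real numbers B and z₀, the double integral ∫_{-∞}^{∞} ∫_{-B}^{B} z₀ / (z₀² + x² + y²)^{3/2} dy dx equals 4·arctan(B / z₀). -/
open MeasureTheory Real Filter Topology

lemma aux_deriv (a k : ℝ) (ha : 0 < a) (y : ℝ) :
    HasDerivAt (fun y : ℝ => k * y * (a + y ^ 2) ^ (-(1:ℝ)/2))
      (k * a * (a + y ^ 2) ^ (-(3:ℝ)/2)) y := by
  have ht : (0:ℝ) < a + y ^ 2 := by positivity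
  have h1 : HasDerivAt (fun y : ℝ => a + y ^ 2) (2 * y) y := by
    simpa using ((hasDerivAt_pow 2 y).const_add a)
  have h2 : HasDerivAt (fun t : ℝ => t ^ (-(1:ℝ)/2))
      ((-(1:ℝ)/2) * (a + y ^ 2) ^ ((-(1:ℝ)/2) - 1)) (a + y ^ 2) :=
    Real.hasDerivAt_rpow_const (Or.inl ht.ne')
  have h3 := h2.comp y h1
  have h4 : HasDerivAt (fun y : ℝ => k * y) k y := by
    simpa using (hasDerivAt_id y).const_mul k
  have h5 := h4.mul h3
  refine h5.congr_deriv (Eq.symm ?_)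
  simp only [Function.comp_apply]
  have e1 : ((-(1:ℝ)/2) - 1) = (-(3:ℝ)/2) := by norm_num
  have e2 : (a + y ^ 2) ^ (-(1:ℝ)/2) = (a + y ^ 2) * (a + y ^ 2) ^ (-(3:ℝ)/2) := by
    rw [show (-(1:ℝ)/2) = 1 + (-(3:ℝ)/2) by norm_num, Real.rpow_add ht, Real.rpow_one]
  rw [e1, e2]
  ring
lemma aux_inner (B z₀ x : ℝ) (hB : 0 < B) (hz : 0 < z₀) :
    (∫ y in (-B)..B, z₀ / (z₀ ^ 2 + x ^ 2 + y ^ 2) ^ ((3 : ℝ) / 2)) =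
      2 * z₀ * B * (z₀ ^ 2 + B ^ 2 + x ^ 2) ^ (-(1:ℝ)/2) / (z₀ ^ 2 + x ^ 2) := by
  have ha : (0:ℝ) < z₀ ^ 2 + x ^ 2 := by positivity
  have hderiv : ∀ y ∈ Set.uIcc (-B) B,
      HasDerivAt (fun y : ℝ => (z₀ / (z₀ ^ 2 + x ^ 2)) * y * ((z₀ ^ 2 + x ^ 2) + y ^ 2) ^ (-(1:ℝ)/2))
        (z₀ / (z₀ ^ 2 + x ^ 2 + y ^ 2) ^ ((3 : ℝ) / 2)) y := by
    intro y _
    have ht : (0:ℝ) < z₀ ^ 2 + x ^ 2 + y ^ 2 := by positivity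
    have h := aux_deriv (z₀ ^ 2 + x ^ 2) (z₀ / (z₀ ^ 2 + x ^ 2)) ha y
    convert h using 1
    rw [show z₀ ^ 2 + x ^ 2 + y ^ 2 = (z₀ ^ 2 + x ^ 2) + y ^ 2 by ring,
      show (-(3:ℝ)/2) = -((3:ℝ)/2) by norm_num, Real.rpow_neg (by positivity : (0:ℝ) ≤ (z₀^2+x^2) + y^2)]
    field_simp
  have hint : IntervalIntegrable (fun y : ℝ => z₀ / (z₀ ^ 2 + x ^ 2 + y ^ 2) ^ ((3 : ℝ) / 2))
      volume (-B) B := by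
    apply Continuous.intervalIntegrable
    apply Continuous.div continuous_const
    · exact (by continuity : Continuous fun y : ℝ => z₀ ^ 2 + x ^ 2 + y ^ 2).rpow_const
        (fun y => Or.inr (by norm_num))
    · intro y
      exact ne_of_gt (Real.rpow_pos_of_pos (by positivity) _)
  rw [intervalIntegral.integral_eq_sub_of_hasDerivAt hderiv hint]
  rw [show (-B) ^ 2 = B ^ 2 by ring]
  rw [show z₀ ^ 2 + B ^ 2 + x ^ 2 = (z₀ ^ 2 + x ^ 2) + B ^ 2 by ring]
  ring
lemma aux_tendsto (B z₀ : ℝ) (hB : 0 < B) (hz : 0 < z₀) :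
    Tendsto (fun x : ℝ => 2 * Real.arctan ((B / z₀) * x * ((z₀ ^ 2 + B ^ 2) + x ^ 2) ^ (-(1:ℝ)/2)))
      atTop (𝓝 (2 * Real.arctan (B / z₀))) := by
  have hc : (0:ℝ) < z₀ ^ 2 + B ^ 2 := by positivity
  have h0 : Tendsto (fun x : ℝ => (z₀ ^ 2 + B ^ 2) / x ^ 2 + 1) atTop (𝓝 1) := by
    have := (tendsto_const_nhds (x := z₀ ^ 2 + B ^ 2) (f := atTop (α := ℝ))).div_atTop
      (tendsto_pow_atTop (two_ne_zero))
    simpa using this.add (tendsto_const_nhds (x := (1:ℝ)))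
  have h1 : Tendsto (fun t : ℝ => t ^ (-(1:ℝ)/2)) (𝓝 1) (𝓝 1) := by
    have := (Real.continuousAt_rpow_const 1 (-(1:ℝ)/2) (Or.inl one_ne_zero)).tendsto
    simpa using this
  have h2 := h1.comp h0
  have heq : ∀ᶠ x : ℝ in atTop,
      ((z₀ ^ 2 + B ^ 2) / x ^ 2 + 1) ^ (-(1:ℝ)/2) = x * ((z₀ ^ 2 + B ^ 2) + x ^ 2) ^ (-(1:ℝ)/2) := by
    filter_upwards [eventually_gt_atTop (0:ℝ)] with x hx
    have hx2 : (0:ℝ) < x ^ 2 := by positivity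
    have : (z₀ ^ 2 + B ^ 2) / x ^ 2 + 1 = ((z₀ ^ 2 + B ^ 2) + x ^ 2) / x ^ 2 := by
      field_simp
    rw [this, Real.div_rpow (by positivity) hx2.le]
    have hxx : (x ^ 2 : ℝ) ^ (-(1:ℝ)/2) = x⁻¹ := by
      rw [← Real.rpow_natCast x 2, ← Real.rpow_mul hx.le]
      norm_num [Real.rpow_neg_one]
    rw [hxx]
    field_simp
  have h3 : Tendsto (fun x : ℝ => x * ((z₀ ^ 2 + B ^ 2) + x ^ 2) ^ (-(1:ℝ)/2)) atTop (𝓝 1) :=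
    h2.congr' heq
  have h4 : Tendsto (fun x : ℝ => (B / z₀) * x * ((z₀ ^ 2 + B ^ 2) + x ^ 2) ^ (-(1:ℝ)/2))
      atTop (𝓝 (B / z₀)) := by
    have := h3.const_mul (B / z₀)
    simpa [mul_assoc, mul_comm, mul_left_comm] using this
  exact ((Real.continuous_arctan.tendsto _).comp h4).const_mul 2
lemma aux_outer_deriv (B z₀ x : ℝ) (hB : 0 < B) (hz : 0 < z₀) :
    HasDerivAt (fun x : ℝ => 2 * Real.arctan ((B / z₀) * x * ((z₀ ^ 2 + B ^ 2) + x ^ 2) ^ (-(1:ℝ)/2)))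
      (2 * z₀ * B * (z₀ ^ 2 + B ^ 2 + x ^ 2) ^ (-(1:ℝ)/2) / (z₀ ^ 2 + x ^ 2)) x := by
  have hc : (0:ℝ) < z₀ ^ 2 + B ^ 2 := by positivity
  have ht : (0:ℝ) < (z₀ ^ 2 + B ^ 2) + x ^ 2 := by positivity
  have hu := aux_deriv (z₀ ^ 2 + B ^ 2) (B / z₀) hc x
  have hG := ((Real.hasDerivAt_arctan _).comp x hu).const_mul 2
  refine hG.congr_deriv (Eq.symm ?_)
  set s : ℝ := ((z₀ ^ 2 + B ^ 2) + x ^ 2) ^ (-(1:ℝ)/2) with hs_def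
  have hs_pos : 0 < s := Real.rpow_pos_of_pos ht _
  have h1 : ((z₀ ^ 2 + B ^ 2) + x ^ 2) * s ^ 2 = 1 := by
    have hss : (s : ℝ) ^ (2:ℕ) = ((z₀ ^ 2 + B ^ 2) + x ^ 2) ^ (-(1:ℝ)) := by
      rw [hs_def, ← Real.rpow_natCast (((z₀ ^ 2 + B ^ 2) + x ^ 2) ^ (-(1:ℝ)/2)) 2,
        ← Real.rpow_mul ht.le]
      norm_num
    rw [hss, Real.rpow_neg_one]
    exact mul_inv_cancel₀ ht.ne'
  have h3 : ((z₀ ^ 2 + B ^ 2) + x ^ 2) ^ (-(3:ℝ)/2) = s ^ 3 := by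
    rw [hs_def, ← Real.rpow_natCast (((z₀ ^ 2 + B ^ 2) + x ^ 2) ^ (-(1:ℝ)/2)) 3,
      ← Real.rpow_mul ht.le]
    norm_num
  rw [h3]
  have hne : (1 + ((B / z₀) * x * s) ^ 2) ≠ 0 := by positivity
  have h2 : 1 + ((B / z₀) * x * s) ^ 2
      = (z₀ ^ 2 + B ^ 2) * (z₀ ^ 2 + x ^ 2) * s ^ 2 / z₀ ^ 2 := by
    field_simp
    linear_combination (-z₀ ^ 2) * h1
  rw [h2]
  have hzx : (z₀ ^ 2 + x ^ 2) ≠ 0 := by positivity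
  field_simp

/-- For all positive real numbers `B`, `z₀`, the double integral
`∫_{-∞}^{∞} ∫_{-B}^{B} z₀ / (z₀² + x² + y²)^{3/2} dy dx` equals `4 · arctan(B / z₀)`. -/
theorem lis_strip_array_gain (B z₀ : ℝ) (hB : 0 < B) (hz : 0 < z₀) :
    (∫ x : ℝ, ∫ y in (-B)..B, z₀ / (z₀ ^ 2 + x ^ 2 + y ^ 2) ^ ((3 : ℝ) / 2)) =
      4 * Real.arctan (B / z₀) := by
  have hinner : ∀ x : ℝ, (∫ y in (-B)..B, z₀ / (z₀ ^ 2 + x ^ 2 + y ^ 2) ^ ((3 : ℝ) / 2)) =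
      2 * z₀ * B * (z₀ ^ 2 + B ^ 2 + x ^ 2) ^ (-(1:ℝ)/2) / (z₀ ^ 2 + x ^ 2) :=
    fun x => aux_inner B z₀ x hB hz
  simp only [hinner]
  have habs : (∫ x : ℝ,
        2 * z₀ * B * (z₀ ^ 2 + B ^ 2 + x ^ 2) ^ (-(1:ℝ)/2) / (z₀ ^ 2 + x ^ 2)) =
      2 * ∫ x in Set.Ioi (0:ℝ),
        2 * z₀ * B * (z₀ ^ 2 + B ^ 2 + x ^ 2) ^ (-(1:ℝ)/2) / (z₀ ^ 2 + x ^ 2) := by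
    rw [← integral_comp_abs
      (f := fun x => 2 * z₀ * B * (z₀ ^ 2 + B ^ 2 + x ^ 2) ^ (-(1:ℝ)/2) / (z₀ ^ 2 + x ^ 2))]
    congr 1
    funext x
    rw [sq_abs]
  rw [habs]
  have hIoi : (∫ x in Set.Ioi (0:ℝ),
      2 * z₀ * B * (z₀ ^ 2 + B ^ 2 + x ^ 2) ^ (-(1:ℝ)/2) / (z₀ ^ 2 + x ^ 2)) =
      2 * Real.arctan (B / z₀) := by
    have h := integral_Ioi_of_hasDerivAt_of_nonneg'
      (g := fun x : ℝ => 2 * Real.arctan ((B / z₀) * x * ((z₀ ^ 2 + B ^ 2) + x ^ 2) ^ (-(1:ℝ)/2)))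
      (g' := fun x : ℝ => 2 * z₀ * B * (z₀ ^ 2 + B ^ 2 + x ^ 2) ^ (-(1:ℝ)/2) / (z₀ ^ 2 + x ^ 2))
      (a := 0) (l := 2 * Real.arctan (B / z₀))
      (fun x _ => aux_outer_deriv B z₀ x hB hz)
      (fun x _ => by positivity)
      (aux_tendsto B z₀ hB hz)
    rw [h]
    norm_num
  rw [hIoi]
  ring
end

section
/- Let θ > 0, c > 0, β = ⌊1/θ⌋ and α = 1/θ − β, and let N(f) denote, for f ∈ ℝ, the number of integers k with |f − kθ| ≤ 1/2. Then (1/θ)·∫_{−θ/2}^{θ/2} log(1 + c·θ·N(f)) df = α·log(1 + (β+1)·θ·c) + (1 − α)·log(1 + β·θ·c). -/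
open MeasureTheory Real

-- auxiliary: the set is an Icc
lemma cap_aux_set (θ : ℝ) (hθ : 0 < θ) (f : ℝ) :
    {k : ℤ | |f - k * θ| ≤ 1 / 2} = Set.Icc ⌈(f - 1/2)/θ⌉ ⌊(f + 1/2)/θ⌋ := by
  ext k
  simp only [Set.mem_setOf_eq, Set.mem_Icc, abs_le, Int.ceil_le, Int.le_floor]
  rw [div_le_iff₀ hθ, le_div_iff₀ hθ]
  constructor
  · rintro ⟨h1, h2⟩; constructor <;> linarith
  · rintro ⟨h1, h2⟩; constructor <;> linarith

lemma cap_aux_card (a b : ℤ) : Nat.card (Set.Icc a b) = (b + 1 - a).toNat := by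
  rw [← Finset.coe_Icc, Nat.card_coe_set_eq, Set.ncard_coe_finset, Int.card_Icc]

/-- Capacity formula (Property 3): with `θ > 0`, `c > 0`, `β = ⌊1/θ⌋`, `α = 1/θ − β`, and
`N f` the number of integers `k` with `|f − kθ| ≤ 1/2`, we have
`(1/θ)·∫_{−θ/2}^{θ/2} log(1 + c·θ·N(f)) df = α·log(1 + (β+1)·θ·c) + (1 − α)·log(1 + β·θ·c)`. -/
theorem capacity_one_dimensional (θ c : ℝ) (hθ : 0 < θ) (hc : 0 < c)
    (β : ℤ) (hβ : β = ⌊1 / θ⌋) (α : ℝ) (hα : α = 1 / θ - β) (N : ℝ → ℕ)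
    (hN : ∀ f : ℝ, N f = Nat.card {k : ℤ | |f - k * θ| ≤ 1 / 2}) :
    (1 / θ) * ∫ f in (-θ / 2)..(θ / 2), Real.log (1 + c * θ * N f) =
      α * Real.log (1 + (β + 1) * θ * c) + (1 - α) * Real.log (1 + β * θ * c) := by
  have hθ' : θ ≠ 0 := ne_of_gt hθ
  have hαf : α = Int.fract (1/θ) := by rw [hα, hβ, Int.fract]
  have hα0 : 0 ≤ α := hαf ▸ Int.fract_nonneg _
  have hα1 : α < 1 := hαf ▸ Int.fract_lt_one _
  have hβ0 : (0:ℤ) ≤ β := by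
    rw [hβ]; exact Int.floor_nonneg.2 (by positivity)
  -- pointwise value of N
  have hNval : ∀ f : ℝ, (N f : ℝ) =
      if Int.fract ((f + 1/2)/θ) ≤ α then (β:ℝ) + 1 else (β:ℝ) := by
    intro f
    set x : ℝ := (f + 1/2)/θ with hx
    have hsub : (f - 1/2)/θ = x - α - β := by
      rw [hx]
      have : (f - 1/2)/θ = (f + 1/2)/θ - 1/θ := by ring
      rw [this, hα]; push_cast; ring
    have hceil : ⌈(f - 1/2)/θ⌉ = ⌈x - α⌉ - β := by
      rw [hsub, show x - α - (β:ℝ) = (x - α) - (β:ℤ) by push_cast; ring, Int.ceil_sub_intCast]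
    have hfr : Int.fract x = x - ⌊x⌋ := rfl
    rw [hN f, cap_aux_set θ hθ f, cap_aux_card, hceil]
    by_cases hle : Int.fract x ≤ α
    · have hc1 : ⌈x - α⌉ = ⌊x⌋ := by
        rw [Int.ceil_eq_iff]
        constructor
        · push_cast
          have := Int.fract_nonneg x
          linarith [hfr ▸ this]
        · have : Int.fract x ≤ α := hle
          rw [hfr] at this; linarith
      rw [hc1, if_pos hle]
      have : (⌊x⌋ + 1 - (⌊x⌋ - β)) = β + 1 := by ring
      rw [this]
      norm_cast
      omega
    · have hc1 : ⌈x - α⌉ = ⌊x⌋ + 1 := by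
        rw [Int.ceil_eq_iff]
        push_cast
        constructor
        · rw [hfr] at hle; push_neg at hle; linarith
        · have := Int.fract_lt_one x
          rw [hfr] at this; linarith
      rw [hc1, if_neg hle]
      have : (⌊x⌋ + 1 - (⌊x⌋ + 1 - β)) = β := by ring
      rw [this]
      norm_cast
      omega
  -- constants
  set A : ℝ := Real.log (1 + (β + 1) * θ * c) with hA
  set B : ℝ := Real.log (1 + β * θ * c) with hB
  set h : ℝ → ℝ := fun x => if Int.fract x ≤ α then A else B with hh
  -- measurability / integrability of h
  have hmeas : Measurable h :=
    Measurable.ite (measurableSet_le measurable_fract measurable_const)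
      measurable_const measurable_const
  have hint : ∀ a b : ℝ, IntervalIntegrable h volume a b := by
    intro a b
    rw [intervalIntegrable_iff]
    apply MeasureTheory.Integrable.mono' (g := fun _ => max |A| |B|)
      ((MeasureTheory.integrableOn_const_iff (by simp)).2 (Or.inr (by rw [Set.uIoc]; exact measure_Ioc_lt_top)))
      hmeas.aestronglyMeasurable.restrict
    refine Filter.Eventually.of_forall fun x => ?_
    rw [hh]; dsimp only
    split
    · simp only [Real.norm_eq_abs]; exact le_max_left _ _
    · simp only [Real.norm_eq_abs]; exact le_max_right _ _
  -- step 1: rewrite integrand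
  have hstep1 : (∫ f in (-θ/2)..(θ/2), Real.log (1 + c * θ * N f))
      = ∫ f in (-θ/2)..(θ/2), h ((f + 1/2)/θ) := by
    apply intervalIntegral.integral_congr
    intro f _
    show Real.log (1 + c * θ * (N f : ℝ)) = h ((f + 1/2)/θ)
    rw [hNval f, hh]
    dsimp only
    by_cases hcond : Int.fract ((f + 1/2)/θ) ≤ α
    · rw [if_pos hcond, if_pos hcond, hA]
      congr 1; ring
    · rw [if_neg hcond, if_neg hcond, hB]
      congr 1; ring
  -- step 2: change of variables
  have hstep2 : (∫ f in (-θ/2)..(θ/2), h ((f + 1/2)/θ))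
      = θ • ∫ x in ((-θ/2)/θ + 1/(2*θ))..((θ/2)/θ + 1/(2*θ)), h x := by
    have : ∀ f : ℝ, (f + 1/2)/θ = f/θ + 1/(2*θ) := by
      intro f; field_simp
    simp_rw [this]
    exact intervalIntegral.integral_comp_div_add h hθ' _
  -- step 3: periodicity
  have hper : Function.Periodic h 1 := by
    intro x; rw [hh]; simp [Int.fract_add_one]
  have hstep3 : (∫ x in ((-θ/2)/θ + 1/(2*θ))..((θ/2)/θ + 1/(2*θ)), h x)
      = ∫ x in (0:ℝ)..1, h x := by
    have e1 : (θ/2)/θ + 1/(2*θ) = ((-θ/2)/θ + 1/(2*θ)) + 1 := by field_simp; ring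
    have e2 : (1:ℝ) = 0 + 1 := by ring
    rw [e1]
    calc ∫ x in ((-θ/2)/θ + 1/(2*θ))..(((-θ/2)/θ + 1/(2*θ)) + 1), h x
        = ∫ x in (0:ℝ)..(0 + 1), h x := hper.intervalIntegral_add_eq _ 0
      _ = ∫ x in (0:ℝ)..1, h x := by norm_num
  -- step 4: compute the integral over [0,1]
  have hsplit : (∫ x in (0:ℝ)..1, h x) = (∫ x in (0:ℝ)..α, h x) + ∫ x in α..1, h x :=
    (intervalIntegral.integral_add_adjacent_intervals (hint 0 α) (hint α 1)).symm
  have hpart1 : (∫ x in (0:ℝ)..α, h x) = α * A := by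
    rw [show (∫ x in (0:ℝ)..α, h x) = ∫ x in (0:ℝ)..α, A from ?_, intervalIntegral.integral_const,
      smul_eq_mul, sub_zero]
    apply intervalIntegral.integral_congr
    intro x hxm
    rw [Set.uIcc_of_le hα0] at hxm
    obtain ⟨hx0, hx1⟩ := hxm
    rw [hh]; dsimp only
    rw [if_pos]
    rw [Int.fract_eq_self.2 ⟨hx0, lt_of_le_of_lt hx1 hα1⟩]; exact hx1
  have hpart2 : (∫ x in α..1, h x) = (1 - α) * B := by
    rw [show (∫ x in α..1, h x) = ∫ x in α..1, B from ?_, intervalIntegral.integral_const,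
      smul_eq_mul]
    apply intervalIntegral.integral_congr_ae
    have hone : ∀ᵐ x : ℝ, x ≠ 1 := by
      rw [MeasureTheory.ae_iff]
      simpa using MeasureTheory.measure_singleton (1:ℝ)
    filter_upwards [hone] with x hx1 hxm
    rw [Set.uIoc_of_le hα1.le] at hxm
    obtain ⟨hxa, hxb⟩ := hxm
    have hxb' : x < 1 := lt_of_le_of_ne hxb hx1
    rw [hh]; dsimp only
    rw [if_neg]
    rw [Int.fract_eq_self.2 ⟨le_of_lt (lt_of_le_of_lt hα0 hxa), hxb'⟩]
    exact not_le.2 hxa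
  rw [hstep1, hstep2, hstep3, hsplit, hpart1, hpart2, smul_eq_mul]
  field_simp
end

section
/- Fix λ > 0, θ > 0, ζ > 0, set Δ_x = λ/(2θ), β = ⌊1/θ⌋ and α = 1/θ − β, and for t > 0 define Ĉ(t) = (1/Δ_x)·[ α·log(1 + (β+1)·θ·ζ·Δ_x·t) + (1 − α)·log(1 + β·θ·ζ·Δ_x·t) ]. Then the limit as t → ∞ of Ĉ(t)/log(t) equals 2/λ if θ ≥ 1, and equals 2θ/λ if 0 < θ < 1. -/
open MeasureTheory Real Filter

lemma log_ratio_lim (c : ℝ) (hc : 0 < c) :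
    Tendsto (fun t : ℝ => Real.log (1 + c * t) / Real.log t) atTop (nhds 1) := by
  have h1 : Tendsto (fun t : ℝ => c + 1 / t) atTop (nhds c) := by
    have := (tendsto_const_nhds (x := c) (f := atTop)).add tendsto_inv_atTop_zero
    simpa [one_div] using this
  have h2 : Tendsto (fun t : ℝ => Real.log (c + 1 / t)) atTop (nhds (Real.log c)) :=
    (Real.continuousAt_log hc.ne').tendsto.comp h1
  have h3 : Tendsto (fun t : ℝ => Real.log (c + 1 / t) / Real.log t) atTop (nhds 0) :=
    h2.div_atTop Real.tendsto_log_atTop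
  have h4 := (tendsto_const_nhds (x := (1:ℝ)) (f := atTop)).add h3
  rw [add_zero] at h4
  refine h4.congr' ?_
  filter_upwards [eventually_gt_atTop 1] with t ht
  have ht0 : (0:ℝ) < t := by linarith
  have hlog : Real.log t ≠ 0 := (Real.log_pos ht).ne'
  have hpos : 0 < c + 1 / t := by positivity
  have harg : 1 + c * t = t * (c + 1 / t) := by field_simp; ring
  rw [harg, Real.log_mul ht0.ne' hpos.ne', add_div, div_self hlog]

/-- Number of independent signal dimensions per meter for the one-dimensional deployment:
with `Δₓ = λ/(2θ)`, `β = ⌊1/θ⌋`, `α = 1/θ − β` and space-normalized capacity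
`Ĉ(t) = (1/Δₓ)·[α·log(1 + (β+1)·θ·ζ·Δₓ·t) + (1 − α)·log(1 + β·θ·ζ·Δₓ·t)]`, the pre-log
factor `lim_{t→∞} Ĉ(t)/log t` equals `2/λ` if `θ ≥ 1` and `2θ/λ` if `0 < θ < 1`. -/
theorem prelog_one_dimensional (lam θ ζ : ℝ) (hlam : 0 < lam) (hθ : 0 < θ) (hζ : 0 < ζ)
    (Δx : ℝ) (hΔx : Δx = lam / (2 * θ)) (β : ℤ) (hβ : β = ⌊1 / θ⌋)
    (α : ℝ) (hα : α = 1 / θ - β) (C : ℝ → ℝ)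
    (hC : ∀ t : ℝ, C t = (1 / Δx) *
      (α * Real.log (1 + (β + 1) * θ * ζ * Δx * t) +
       (1 - α) * Real.log (1 + β * θ * ζ * Δx * t))) :
    (1 ≤ θ →
      Filter.Tendsto (fun t : ℝ => C t / Real.log t) atTop (nhds (2 / lam))) ∧
    (θ < 1 →
      Filter.Tendsto (fun t : ℝ => C t / Real.log t) atTop (nhds (2 * θ / lam))) := by
  have hΔ0 : 0 < Δx := by rw [hΔx]; positivity
  have key : ∀ t : ℝ, C t / Real.log t =
      (1 / Δx) * (α * (Real.log (1 + (β + 1) * θ * ζ * Δx * t) / Real.log t) +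
        (1 - α) * (Real.log (1 + β * θ * ζ * Δx * t) / Real.log t)) := by
    intro t; rw [hC]; ring
  constructor
  · intro h1θ
    rcases eq_or_lt_of_le h1θ with heq | hlt
    · -- θ = 1, β = 1, α = 0
      have hβ1 : β = 1 := by rw [hβ, ← heq]; norm_num
      have hα0 : α = 0 := by rw [hα, hβ1, ← heq]; norm_num
      have T1 := log_ratio_lim ((β + 1) * θ * ζ * Δx) (by rw [hβ1]; push_cast; positivity)
      have T2 := log_ratio_lim (β * θ * ζ * Δx) (by rw [hβ1]; push_cast; positivity)
      have := (tendsto_const_nhds (x := 1 / Δx) (f := atTop)).mul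
        (((tendsto_const_nhds (x := α)).mul T1).add ((tendsto_const_nhds (x := 1 - α)).mul T2))
      have hval : (1 / Δx) * (α * 1 + (1 - α) * 1) = 2 / lam := by
        rw [hα0, hΔx, ← heq]; field_simp; ring
      rw [hval] at this
      exact this.congr fun t => (key t).symm
    · -- θ > 1, β = 0, α = 1/θ
      have hβ0 : β = 0 := by
        rw [hβ]; rw [Int.floor_eq_zero_iff]
        constructor
        · positivity
        · rw [div_lt_one hθ]; exact hlt
      have T1 := log_ratio_lim ((β + 1) * θ * ζ * Δx) (by rw [hβ0]; push_cast; positivity)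
      have T2 : Tendsto (fun t : ℝ => Real.log (1 + β * θ * ζ * Δx * t) / Real.log t)
          atTop (nhds 0) := by
        have : ∀ t : ℝ, Real.log (1 + β * θ * ζ * Δx * t) / Real.log t = 0 := by
          intro t; rw [hβ0]; push_cast; simp
        simpa [this] using tendsto_const_nhds (x := (0:ℝ)) (f := atTop)
      have := (tendsto_const_nhds (x := 1 / Δx) (f := atTop)).mul
        (((tendsto_const_nhds (x := α)).mul T1).add ((tendsto_const_nhds (x := 1 - α)).mul T2))
      have hval : (1 / Δx) * (α * 1 + (1 - α) * 0) = 2 / lam := by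
        rw [hα, hβ0, hΔx]; push_cast; field_simp; ring
      rw [hval] at this
      exact this.congr fun t => (key t).symm
  · intro hlt
    have hβ1 : (1:ℝ) ≤ (β : ℝ) := by
      have : (1:ℤ) ≤ β := by
        rw [hβ]; refine Int.le_floor.mpr ?_
        push_cast; rw [le_div_iff₀ hθ]; linarith
      exact_mod_cast this
    have T1 := log_ratio_lim ((β + 1) * θ * ζ * Δx)
      (mul_pos (mul_pos (mul_pos (by linarith : (0:ℝ) < (β:ℝ) + 1) hθ) hζ) hΔ0)
    have T2 := log_ratio_lim (β * θ * ζ * Δx)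
      (mul_pos (mul_pos (mul_pos (by linarith : (0:ℝ) < (β:ℝ)) hθ) hζ) hΔ0)
    have := (tendsto_const_nhds (x := 1 / Δx) (f := atTop)).mul
      (((tendsto_const_nhds (x := α)).mul T1).add ((tendsto_const_nhds (x := 1 - α)).mul T2))
    have hval : (1 / Δx) * (α * 1 + (1 - α) * 1) = 2 * θ / lam := by
      rw [hΔx]; field_simp; ring
    rw [hval] at this
    exact this.congr fun t => (key t).symm
end

section
/- Let θ > 0, β = ⌊1/θ⌋ and α = 1/θ − β, and let N(f) denote, for f ∈ ℝ, the number of integers k with |f − kθ| ≤ 1/2. Then ∫_{−θ/2}^{θ/2} N(f)² df = θ·(β² + 2αβ + α). -/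
open MeasureTheory Real

/-- Description of the fold set as an integer interval. -/
lemma fold_set_eq_Icc (θ : ℝ) (hθ : 0 < θ) (f : ℝ) (lo hi : ℤ)
    (h1 : f - 1/2 ≤ lo * θ) (h2 : ((lo : ℝ) - 1) * θ < f - 1/2)
    (h3 : (hi : ℝ) * θ ≤ f + 1/2) (h4 : f + 1/2 < ((hi : ℝ) + 1) * θ) :
    {k : ℤ | |f - k * θ| ≤ 1 / 2} = Set.Icc lo hi := by
  ext k
  simp only [Set.mem_setOf_eq, Set.mem_Icc, abs_le]
  constructor
  · rintro ⟨ha, hb⟩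
    constructor
    · by_contra h
      push_neg at h
      have hk : (k : ℝ) ≤ (lo : ℝ) - 1 := by exact_mod_cast Int.le_sub_one_of_lt h
      have : (k : ℝ) * θ ≤ ((lo : ℝ) - 1) * θ := by nlinarith
      linarith
    · by_contra h
      push_neg at h
      have hk : (hi : ℝ) + 1 ≤ (k : ℝ) := by exact_mod_cast h
      have : ((hi : ℝ) + 1) * θ ≤ (k : ℝ) * θ := by nlinarith
      linarith
  · rintro ⟨ha, hb⟩
    have ha' : (lo : ℝ) * θ ≤ k * θ := by
      have : (lo : ℝ) ≤ k := by exact_mod_cast ha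
      nlinarith
    have hb' : (k : ℝ) * θ ≤ hi * θ := by
      have : (k : ℝ) ≤ hi := by exact_mod_cast hb
      nlinarith
    constructor <;> linarith

lemma fold_card (θ : ℝ) (hθ : 0 < θ) (f : ℝ) (lo hi : ℤ)
    (h1 : f - 1/2 ≤ lo * θ) (h2 : ((lo : ℝ) - 1) * θ < f - 1/2)
    (h3 : (hi : ℝ) * θ ≤ f + 1/2) (h4 : f + 1/2 < ((hi : ℝ) + 1) * θ) :
    Nat.card {k : ℤ | |f - k * θ| ≤ 1 / 2} = (hi + 1 - lo).toNat := by
  rw [fold_set_eq_Icc θ hθ f lo hi h1 h2 h3 h4, ← Finset.coe_Icc,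
    Nat.card_coe_set_eq, Set.ncard_coe_finset, Int.card_Icc]

/-- Second moment of the fold-count function: with `θ > 0`, `β = ⌊1/θ⌋`, `α = 1/θ − β`, and
`N f` the number of integers `k` with `|f − kθ| ≤ 1/2`, we have
`∫_{−θ/2}^{θ/2} N(f)² df = θ·(β² + 2αβ + α)`. -/
theorem fold_count_second_moment (θ : ℝ) (hθ : 0 < θ) (β : ℤ) (hβ : β = ⌊1 / θ⌋)
    (α : ℝ) (hα : α = 1 / θ - β) (N : ℝ → ℕ)
    (hN : ∀ f : ℝ, N f = Nat.card {k : ℤ | |f - k * θ| ≤ 1 / 2}) :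
    (∫ f in (-θ / 2)..(θ / 2), ((N f : ℝ)) ^ 2) =
      θ * ((β : ℝ) ^ 2 + 2 * α * β + α) := by
  have hβ0 : 0 ≤ β := by
    rw [hβ]; exact Int.le_floor.2 (by simp; positivity)
  have hα0 : 0 ≤ α := by
    rw [hα, hβ]; exact sub_nonneg.2 (Int.floor_le _)
  have hα1 : α < 1 := by
    rw [hα, hβ]; have := Int.lt_floor_add_one (1/θ); linarith
  have hbt : (β : ℝ) * θ = 1 - α * θ := by
    have h1 : (β : ℝ) = 1/θ - α := by linarith [hα]
    field_simp [h1]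
    rw [h1, sub_mul, one_div, inv_mul_cancel₀ hθ.ne', mul_comm]
  -- periodicity
  have hper : Function.Periodic (fun f => ((N f : ℝ)) ^ 2) θ := by
    intro f
    have hset : {k : ℤ | |f + θ - k * θ| ≤ 1 / 2}
        = (fun k => k + 1) '' {k : ℤ | |f - k * θ| ≤ 1/2} := by
      ext k
      simp only [Set.mem_setOf_eq, Set.mem_image]
      constructor
      · intro h
        exact ⟨k - 1, by push_cast; convert h using 2; ring, by ring⟩
      · rintro ⟨j, hj, rfl⟩
        push_cast
        convert hj using 2; ring
    have hNN : N (f + θ) = N f := by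
      rw [hN, hN, hset, Nat.card_image_of_injective (add_left_injective 1)]
    simp [hNN]
  -- shift the integral
  have hshift : (∫ f in (-θ / 2)..(θ / 2), ((N f : ℝ)) ^ 2)
      = ∫ f in (-(1:ℝ)/2)..(-(1:ℝ)/2 + θ), ((N f : ℝ)) ^ 2 := by
    have h := hper.intervalIntegral_add_eq (-θ/2) (-(1:ℝ)/2)
    have he : -θ/2 + θ = θ/2 := by ring
    rw [he] at h
    exact h
  rw [hshift]
  have hc1 : -(1:ℝ)/2 ≤ α * θ - 1/2 := by nlinarith
  have hc2 : α * θ - 1/2 ≤ -(1:ℝ)/2 + θ := by nlinarith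
  -- values on the two pieces
  have hval1 : ∀ f ∈ Set.uIcc (-(1:ℝ)/2) (α * θ - 1/2),
      ((N f : ℝ)) ^ 2 = ((β : ℝ) + 1)^2 := by
    intro f hf
    rw [Set.uIcc_of_le hc1, Set.mem_Icc] at hf
    have hcard := fold_card θ hθ f (-β) 0
      (by push_cast; nlinarith [hf.2, hbt]) (by push_cast; nlinarith [hf.1, hbt, hα1])
      (by push_cast; nlinarith [hf.1]) (by push_cast; nlinarith [hf.2, hα1, hθ])
    rw [hN, hcard]
    have hco : ((0 + 1 - -β).toNat : ℝ) = (β : ℝ) + 1 := by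
      have h : (((0 + 1 - -β).toNat : ℤ)) = β + 1 := by
        rw [Int.toNat_of_nonneg (by omega)]
        omega
      exact_mod_cast h
    rw [hco]
  have hval2 : ∀ f ∈ Set.Ioo (α * θ - 1/2) (-(1:ℝ)/2 + θ),
      ((N f : ℝ)) ^ 2 = ((β : ℝ))^2 := by
    intro f hf
    obtain ⟨hf1, hf2⟩ := hf
    have hcard := fold_card θ hθ f (1 - β) 0
      (by push_cast; nlinarith [hbt, hα0, hθ]) (by push_cast; nlinarith [hbt])
      (by push_cast; nlinarith [hα0, hθ]) (by push_cast; nlinarith)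
    rw [hN, hcard]
    have hco : ((0 + 1 - (1 - β)).toNat : ℝ) = (β : ℝ) := by
      have h : (((0 + 1 - (1 - β)).toNat : ℤ)) = β := by
        rw [Int.toNat_of_nonneg (by omega)]
        omega
      exact_mod_cast h
    rw [hco]
  -- ae statement for the second piece
  have hae2 : ∀ᵐ x ∂(volume : Measure ℝ), x ∈ Set.uIoc (α * θ - 1/2) (-(1:ℝ)/2 + θ) →
      ((N x : ℝ)) ^ 2 = ((β : ℝ))^2 := by
    have hne : ∀ᵐ x ∂(volume : Measure ℝ), x ≠ (-(1:ℝ)/2 + θ) := by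
      rw [ae_iff]
      simp [measure_singleton]
    filter_upwards [hne] with x hx hmem
    rw [Set.uIoc_of_le hc2] at hmem
    exact hval2 x ⟨hmem.1, lt_of_le_of_ne hmem.2 hx⟩
  have hi1 : (∫ f in (-(1:ℝ)/2)..(α * θ - 1/2), ((N f : ℝ)) ^ 2)
      = ((α * θ - 1/2) - (-(1:ℝ)/2)) * ((β : ℝ) + 1)^2 := by
    rw [intervalIntegral.integral_congr hval1, intervalIntegral.integral_const, smul_eq_mul]
  have hi2 : (∫ f in (α * θ - 1/2)..(-(1:ℝ)/2 + θ), ((N f : ℝ)) ^ 2)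
      = ((-(1:ℝ)/2 + θ) - (α * θ - 1/2)) * ((β : ℝ))^2 := by
    rw [intervalIntegral.integral_congr_ae hae2, intervalIntegral.integral_const, smul_eq_mul]
  have h1e : (fun f => ((N f : ℝ)) ^ 2)
      =ᵐ[volume.restrict (Set.uIoc (-(1:ℝ)/2) (α * θ - 1/2))] (fun _ => ((β : ℝ) + 1)^2) :=
    (ae_restrict_iff' measurableSet_uIoc).2
      (Filter.Eventually.of_forall fun x hx => hval1 x (Set.uIoc_subset_uIcc hx))
  have h2e : (fun f => ((N f : ℝ)) ^ 2)
      =ᵐ[volume.restrict (Set.uIoc (α * θ - 1/2) (-(1:ℝ)/2 + θ))] (fun _ => ((β : ℝ))^2) :=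
    (ae_restrict_iff' measurableSet_uIoc).2 hae2
  have hint1 : IntervalIntegrable (fun f => ((N f : ℝ)) ^ 2) volume (-(1:ℝ)/2) (α * θ - 1/2) :=
    (intervalIntegrable_const (c := ((β : ℝ) + 1)^2)).congr_ae h1e.symm
  have hint2 : IntervalIntegrable (fun f => ((N f : ℝ)) ^ 2) volume
      (α * θ - 1/2) (-(1:ℝ)/2 + θ) :=
    (intervalIntegrable_const (c := ((β : ℝ))^2)).congr_ae h2e.symm
  rw [← intervalIntegral.integral_add_adjacent_intervals hint1 hint2, hi1, hi2]
  ring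
end

section
/- For all λ > 0, P̂ > 0 and N₀ > 0, set N = λ·P̂/(4π·N₀). Then 2π·∫_{0}^{1/λ} s·log(1 + N·λ/√(1 − λ²s²)) ds = π·( log(1 + λN)/λ² + N²·log( Nλ/(1 + Nλ) ) + N/λ ). -/
open MeasureTheory Real

private noncomputable def Hfun (a v : ℝ) : ℝ :=
  ((v ^ 2 - a ^ 2) / 2) * Real.log (v + a) + a * v / 2 - v / 2 * (v * Real.log v)

private lemma Hfun_hasDerivAt {a v : ℝ} (ha : 0 < a) (hv : 0 < v) :
    HasDerivAt (Hfun a) (v * (Real.log (v + a) - Real.log v)) v := by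
  have hva : v + a ≠ 0 := by positivity
  have h1 : HasDerivAt (fun v : ℝ => ((v ^ 2 - a ^ 2) / 2) * Real.log (v + a))
      (((2 : ℕ) * v ^ 1 / 2) * Real.log (v + a) + ((v ^ 2 - a ^ 2) / 2) * (1 / (v + a))) v := by
    exact (((hasDerivAt_pow 2 v).sub_const (a ^ 2)).div_const 2).mul
      (((hasDerivAt_id v).add_const a).log hva)
  have h2 : HasDerivAt (fun v : ℝ => a * v / 2) (a * 1 / 2) v :=
    ((hasDerivAt_id v).const_mul a).div_const 2
  have h3 : HasDerivAt (fun v : ℝ => v / 2 * (v * Real.log v))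
      ((1 / 2) * (v * Real.log v) + v / 2 * (Real.log v + 1)) v :=
    ((hasDerivAt_id v).div_const 2).mul (Real.hasDerivAt_mul_log hv.ne')
  have := (h1.add h2).sub h3
  refine this.congr_deriv ?_
  have : ((v:ℝ) ^ 2 - a ^ 2) / 2 * (1 / (v + a)) = (v - a) / 2 := by
    rw [div_mul_div_comm, mul_one]
    rw [show v ^ 2 - a ^ 2 = (v - a) * (v + a) by ring]
    field_simp
  rw [this]
  push_cast
  ring

private lemma Hfun_continuousOn {a : ℝ} (ha : 0 < a) :
    ContinuousOn (Hfun a) (Set.Ici 0) := by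
  have h1 : ContinuousOn (fun v : ℝ => ((v ^ 2 - a ^ 2) / 2) * Real.log (v + a)) (Set.Ici 0) := by
    apply ContinuousOn.mul (by fun_prop)
    apply ContinuousOn.log (by fun_prop)
    intro v hv
    have : (0:ℝ) ≤ v := hv
    positivity
  have h2 : Continuous (fun v : ℝ => a * v / 2) := by fun_prop
  have h3 : Continuous (fun v : ℝ => v / 2 * (v * Real.log v)) :=
    (continuous_id.div_const 2).mul Real.continuous_mul_log
  exact ((h1.add h2.continuousOn).sub h3.continuousOn : _)

private lemma intervalIntegrable_log01 :
    IntervalIntegrable Real.log MeasureTheory.volume 0 1 := by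
  rw [intervalIntegrable_iff]
  have hrpow : IntervalIntegrable (fun x : ℝ => 2 * x ^ (-(1/2) : ℝ)) volume 0 1 :=
    (intervalIntegral.intervalIntegrable_rpow' (by norm_num)).const_mul 2
  rw [intervalIntegrable_iff] at hrpow
  refine hrpow.mono' Real.measurable_log.aestronglyMeasurable ?_
  filter_upwards [MeasureTheory.ae_restrict_mem measurableSet_uIoc] with x hx
  rw [Set.uIoc_of_le (by norm_num : (0:ℝ) ≤ 1)] at hx
  obtain ⟨hx0, hx1⟩ := hx
  have hlog : Real.log x ≤ 0 := Real.log_nonpos hx0.le hx1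
  have hpow : (0:ℝ) < x ^ (-(1/2) : ℝ) := Real.rpow_pos_of_pos hx0 _
  have h1 : Real.log (x ^ (-(1/2) : ℝ)) ≤ x ^ (-(1/2) : ℝ) - 1 :=
    Real.log_le_sub_one_of_pos hpow
  rw [Real.log_rpow hx0] at h1
  rw [Real.norm_eq_abs, abs_of_nonpos hlog]
  linarith

/-- Closed-form space-normalized capacity for the two-dimensional deployment: with
`N = λ·P̂/(4π·N₀)`,
`2π·∫₀^{1/λ} s·log(1 + Nλ/√(1 − λ²s²)) ds
  = π·(log(1 + λN)/λ² + N²·log(Nλ/(1 + Nλ)) + N/λ)`. -/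
theorem capacity_two_dimensional_closed_form (lam P N₀ : ℝ) (hlam : 0 < lam)
    (hP : 0 < P) (hN₀ : 0 < N₀) (N : ℝ) (hN : N = lam * P / (4 * π * N₀)) :
    2 * π * ∫ s in (0 : ℝ)..(1 / lam),
        s * Real.log (1 + N * lam / Real.sqrt (1 - lam ^ 2 * s ^ 2)) =
      π * (Real.log (1 + lam * N) / lam ^ 2 +
        N ^ 2 * Real.log (N * lam / (1 + N * lam)) + N / lam) := by
  have hπ : (0:ℝ) < π := Real.pi_pos
  have hNpos : 0 < N := by rw [hN]; positivity
  have hlam' : lam ≠ 0 := hlam.ne'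
  set a : ℝ := N * lam with ha
  have hapos : 0 < a := mul_pos hNpos hlam
  have hb : (0:ℝ) ≤ 1 / lam := by positivity
  set v : ℝ → ℝ := fun s => Real.sqrt (1 - lam ^ 2 * s ^ 2) with hvdef
  set G : ℝ → ℝ := fun s => -(1 / lam ^ 2) * Hfun a (v s) with hGdef
  -- continuity of G
  have hvcont : Continuous v := by
    apply Real.continuous_sqrt.comp; fun_prop
  have hGcont : ContinuousOn G (Set.Icc 0 (1 / lam)) := by
    refine continuousOn_const.mul ((Hfun_continuousOn hapos).comp hvcont.continuousOn ?_)
    intro s _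
    exact Real.sqrt_nonneg _
  -- positivity of the inner expression on the open interval
  have hpos : ∀ x ∈ Set.Ioo (0:ℝ) (1 / lam), 0 < 1 - lam ^ 2 * x ^ 2 := by
    intro x hx
    have h1 : lam * x < 1 := by
      have := hx.2
      calc lam * x < lam * (1 / lam) := by
            exact (mul_lt_mul_iff_right₀ hlam).mpr hx.2
        _ = 1 := by field_simp
    have h0 : 0 ≤ lam * x := mul_nonneg hlam.le hx.1.le
    nlinarith
  -- derivative of G
  have hderiv : ∀ x ∈ Set.Ioo (0:ℝ) (1 / lam),
      HasDerivAt G (x * Real.log (1 + N * lam / Real.sqrt (1 - lam ^ 2 * x ^ 2))) x := by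
    intro x hx
    have hin : 0 < 1 - lam ^ 2 * x ^ 2 := hpos x hx
    have hu : 0 < v x := Real.sqrt_pos.mpr hin
    have hvx : HasDerivAt v ((-(lam ^ 2 * ((2:ℕ) * x ^ 1))) / (2 * v x)) x := by
      exact (((hasDerivAt_pow 2 x).const_mul (lam ^ 2)).const_sub 1).sqrt hin.ne'
    have hH : HasDerivAt (Hfun a) (v x * (Real.log (v x + a) - Real.log (v x))) (v x) :=
      Hfun_hasDerivAt hapos hu
    have hcomp := (hH.comp x hvx).const_mul (-(1 / lam ^ 2))
    have hGd : HasDerivAt G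
        (-(1 / lam ^ 2) * (v x * (Real.log (v x + a) - Real.log (v x)) *
          ((-(lam ^ 2 * ((2:ℕ) * x ^ 1))) / (2 * v x)))) x := by
      simpa [hGdef, Function.comp_def] using hcomp
    convert hGd using 1
    have e1 : 1 + N * lam / Real.sqrt (1 - lam ^ 2 * x ^ 2) = (v x + a) / v x := by
      rw [hvdef]
      field_simp
      rw [ha]
    rw [e1, Real.log_div (by positivity) hu.ne']
    field_simp
    ring
  -- integrability of the integrand
  have hloglin : IntervalIntegrable (fun s => Real.log (1 - lam * s)) volume 0 (1 / lam) := by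
    have h1 := (intervalIntegrable_log01.comp_sub_left 1)
    have h2 := h1.comp_mul_left (c := lam)
    simp only [sub_zero, sub_self] at h2
    have : (0:ℝ) = 0 / lam := by simp
    simpa [div_self hlam'] using h2.symm
  have hint : IntervalIntegrable
      (fun s => s * Real.log (1 + N * lam / Real.sqrt (1 - lam ^ 2 * s ^ 2)))
      volume 0 (1 / lam) := by
    have huIcc : Set.uIcc (0:ℝ) (1 / lam) = Set.Icc 0 (1 / lam) := Set.uIcc_of_le hb
    have hg : IntervalIntegrable
        (fun s => s * Real.log (v s + a) -
          (s / 2 * Real.log (1 - lam * s) + s / 2 * Real.log (1 + lam * s)))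
        volume 0 (1 / lam) := by
      refine IntervalIntegrable.sub ?_ (IntervalIntegrable.add ?_ ?_)
      · refine ContinuousOn.intervalIntegrable ?_
        refine continuousOn_id.mul (ContinuousOn.log ?_ ?_)
        · exact (hvcont.continuousOn.add continuousOn_const)
        · intro s _
          have : (0:ℝ) ≤ v s := Real.sqrt_nonneg _
          positivity
      · exact hloglin.continuousOn_mul (by fun_prop)
      · refine ContinuousOn.intervalIntegrable ?_
        refine (continuousOn_id.div_const 2).mul (ContinuousOn.log (by fun_prop) ?_)
        intro s hs
        rw [huIcc] at hs
        have h0 : (0:ℝ) ≤ s := hs.1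
        positivity
    rw [intervalIntegrable_iff] at hg ⊢
    refine hg.congr ?_
    · -- a.e. equality on uIoc
      have hne : ∀ᵐ s : ℝ ∂(volume.restrict (Set.uIoc (0:ℝ) (1 / lam))), s ≠ 1 / lam := by
        refine (MeasureTheory.ae_iff.mpr ?_)
        have : {s : ℝ | ¬ s ≠ 1 / lam} = {1 / lam} := by ext s; simp
        rw [this]
        exact le_antisymm (le_trans (MeasureTheory.Measure.restrict_apply_le _ _)
          (by simp)) zero_le
      filter_upwards [hne, MeasureTheory.ae_restrict_mem measurableSet_uIoc] with s hsne hs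
      rw [Set.uIoc_of_le hb] at hs
      have hslt : s < 1 / lam := lt_of_le_of_ne hs.2 hsne
      have hin : 0 < 1 - lam ^ 2 * s ^ 2 := hpos s ⟨hs.1, hslt⟩
      have hu : 0 < v s := Real.sqrt_pos.mpr hin
      have h1m : 0 < 1 - lam * s := by nlinarith [mul_lt_mul_of_pos_left hslt hlam]
      have h1p : 0 < 1 + lam * s := by nlinarith [hs.1, hlam.le]
      have e1 : 1 + N * lam / Real.sqrt (1 - lam ^ 2 * s ^ 2) = (v s + a) / v s := by
        rw [hvdef]; field_simp; rw [ha]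
      have e2 : Real.log (v s) = (Real.log (1 - lam * s) + Real.log (1 + lam * s)) / 2 := by
        rw [hvdef]
        simp only []
        rw [Real.log_sqrt hin.le]
        rw [show 1 - lam ^ 2 * s ^ 2 = (1 - lam * s) * (1 + lam * s) by ring,
          Real.log_mul h1m.ne' h1p.ne']
      rw [e1, Real.log_div (by positivity) hu.ne', e2]
      ring
  -- fundamental theorem of calculus
  have key := intervalIntegral.integral_eq_sub_of_hasDeriv_right_of_le hb hGcont
    (fun x hx => (hderiv x hx).hasDerivWithinAt) hint
  rw [key]
  -- evaluate G at the endpoints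
  have hv1 : v (1 / lam) = 0 := by
    rw [hvdef]
    simp only []
    rw [show 1 - lam ^ 2 * (1 / lam) ^ 2 = 0 by field_simp; norm_num]
    exact Real.sqrt_zero
  have hv0 : v 0 = 1 := by
    rw [hvdef]; norm_num
  rw [hGdef]
  simp only [hv1, hv0]
  unfold Hfun
  rw [Real.log_div hapos.ne' (by positivity : (1:ℝ) + N * lam ≠ 0)]
  rw [show (1:ℝ) + lam * N = 1 + N * lam by ring]
  rw [Real.log_one]
  simp only [ha]
  have h1 : Real.log (0 + N * lam) = Real.log (N * lam) := by norm_num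
  rw [h1]
  field_simp
  ring
end

section
/- Fix P̂ > 0 and N₀ > 0, and for λ > 0 set N = λ·P̂/(4π·N₀) and Ĉ(λ) = π·( log(1 + λN)/λ² + N²·log( Nλ/(1 + Nλ) ) + N/λ ). Then the limit of Ĉ(λ) as λ → 0⁺ equals P̂/(2N₀). -/
open MeasureTheory Real Filter

lemma log_one_add_div_tendsto : Tendsto (fun t : ℝ => Real.log (1 + t) / t)
    (nhdsWithin 0 {(0:ℝ)}ᶜ) (nhds 1) := by
  have h : HasDerivAt (fun t : ℝ => Real.log (1 + t)) 1 0 := by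
    have h1 : HasDerivAt (fun t : ℝ => 1 + t) 1 0 := by
      simpa using (hasDerivAt_id (0:ℝ)).const_add 1
    have := (Real.hasDerivAt_log (by norm_num : (1:ℝ) + 0 ≠ 0)).comp 0 h1
    simpa [Function.comp_def] using this
  have := hasDerivAt_iff_tendsto_slope.mp h
  refine this.congr (fun t => ?_)
  simp [slope_def_field, div_eq_div_iff]

/-- Corollary 2: with `N(λ) = λ·P̂/(4π·N₀)` and
`Ĉ(λ) = π·(log(1 + λN)/λ² + N²·log(Nλ/(1 + Nλ)) + N/λ)`, the space-normalized capacity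
`Ĉ(λ)` tends to `P̂/(2N₀)` as the wavelength `λ → 0⁺`. -/
theorem capacity_two_dimensional_limit (P N₀ : ℝ) (hP : 0 < P) (hN₀ : 0 < N₀) :
    Filter.Tendsto
      (fun lam : ℝ =>
        π * (Real.log (1 + lam * (lam * P / (4 * π * N₀))) / lam ^ 2 +
          (lam * P / (4 * π * N₀)) ^ 2 *
            Real.log ((lam * P / (4 * π * N₀)) * lam / (1 + (lam * P / (4 * π * N₀)) * lam)) +
          (lam * P / (4 * π * N₀)) / lam))
      (nhdsWithin 0 (Set.Ioi 0)) (nhds (P / (2 * N₀))) := by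
  have hπ : (0:ℝ) < π := Real.pi_pos
  set c : ℝ := P / (4 * π * N₀) with hc
  have hcpos : 0 < c := by positivity
  -- map λ ↦ c * λ² into Ioi 0
  have hmap : Tendsto (fun lam : ℝ => c * lam ^ 2) (nhdsWithin 0 (Set.Ioi 0))
      (nhdsWithin 0 (Set.Ioi 0)) := by
    apply tendsto_nhdsWithin_of_tendsto_nhds_of_eventually_within
    · have : Tendsto (fun lam : ℝ => c * lam ^ 2) (nhds 0) (nhds (c * 0 ^ 2)) :=
        ((continuous_const.mul (continuous_pow 2)).tendsto 0)
      simpa using this.mono_left nhdsWithin_le_nhds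
    · filter_upwards [self_mem_nhdsWithin] with lam hlam
      have hl : (0:ℝ) < lam := hlam
      exact Set.mem_Ioi.mpr (by positivity)
  have hmap' : Tendsto (fun lam : ℝ => c * lam ^ 2) (nhdsWithin 0 (Set.Ioi 0))
      (nhdsWithin 0 {(0:ℝ)}ᶜ) :=
    hmap.mono_right (nhdsWithin_mono _ (fun x hx => ne_of_gt hx))
  -- Term A : log(1 + c λ²)/λ² → c
  have hA : Tendsto (fun lam : ℝ => Real.log (1 + c * lam ^ 2) / lam ^ 2)
      (nhdsWithin 0 (Set.Ioi 0)) (nhds c) := by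
    have h1 := (log_one_add_div_tendsto.comp hmap').const_mul c
    rw [mul_one] at h1
    refine h1.congr' ?_
    filter_upwards [self_mem_nhdsWithin] with lam hlam
    have hl : (0:ℝ) < lam := hlam
    simp only [Function.comp_apply]
    field_simp
  -- Term B : c² λ² log(c λ²) → 0
  have hB : Tendsto (fun lam : ℝ => c ^ 2 * lam ^ 2 * Real.log (c * lam ^ 2))
      (nhdsWithin 0 (Set.Ioi 0)) (nhds 0) := by
    have h0 : Tendsto (fun t : ℝ => Real.log t * t) (nhdsWithin 0 (Set.Ioi 0)) (nhds 0) := by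
      simpa [Real.rpow_one] using tendsto_log_mul_rpow_nhdsGT_zero (r := 1) one_pos
    have h1 := (h0.comp hmap).const_mul c
    rw [mul_zero] at h1
    refine h1.congr (fun lam => ?_)
    simp only [Function.comp]
    ring
  -- Term C : c² λ² log(1 + c λ²) → 0
  have hC : Tendsto (fun lam : ℝ => c ^ 2 * lam ^ 2 * Real.log (1 + c * lam ^ 2))
      (nhdsWithin 0 (Set.Ioi 0)) (nhds 0) := by
    have : Tendsto (fun lam : ℝ => c ^ 2 * lam ^ 2 * Real.log (1 + c * lam ^ 2)) (nhds 0)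
        (nhds (c ^ 2 * 0 ^ 2 * Real.log (1 + c * 0 ^ 2))) := by
      apply Tendsto.mul ((continuous_const.mul (continuous_pow 2)).tendsto 0)
      exact ((Real.continuousAt_log (by norm_num)).tendsto.comp
        ((continuous_const.add (continuous_const.mul (continuous_pow 2))).tendsto 0))
    simpa using this.mono_left nhdsWithin_le_nhds
  have hsum : Tendsto
      (fun lam : ℝ => π * (Real.log (1 + c * lam ^ 2) / lam ^ 2 +
        (c ^ 2 * lam ^ 2 * Real.log (c * lam ^ 2) -
          c ^ 2 * lam ^ 2 * Real.log (1 + c * lam ^ 2)) + c))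
      (nhdsWithin 0 (Set.Ioi 0)) (nhds (π * (c + (0 - 0) + c))) :=
    (((hA.add (hB.sub hC)).add tendsto_const_nhds)).const_mul π
  have hval : π * (c + (0 - 0) + c) = P / (2 * N₀) := by
    rw [hc]; field_simp; ring
  rw [hval] at hsum
  refine hsum.congr' ?_
  filter_upwards [self_mem_nhdsWithin] with lam hlam
  have hl : (0:ℝ) < lam := hlam
  have hN : lam * P / (4 * π * N₀) = lam * c := by rw [hc]; ring
  have harg : (0:ℝ) < c * lam ^ 2 := by positivity
  have harg1 : (0:ℝ) < 1 + c * lam ^ 2 := by positivity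
  rw [hN]
  have hlog : Real.log (lam * c * lam / (1 + lam * c * lam)) =
      Real.log (c * lam ^ 2) - Real.log (1 + c * lam ^ 2) := by
    rw [Real.log_div (by positivity) (by nlinarith)]
    congr 2 <;> ring
  rw [hlog]
  have h3 : lam * c / lam = c := by field_simp
  rw [h3]
  congr 1
  have : lam * (lam * c) = c * lam ^ 2 := by ring
  rw [this]
  ring
end

section
/- Fix λ > 0, and for t > 0 set N(t) = λ·t/(4π) and Ĉ(t) = π·( log(1 + λ·N(t))/λ² + N(t)²·log( N(t)·λ/(1 + N(t)·λ) ) + N(t)/λ ). Then the limit as t → ∞ of Ĉ(t)/log(t) equals π/λ². -/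
open MeasureTheory Real Filter

private lemma one_sub_inv_le_log {x : ℝ} (hx : 0 < x) : 1 - 1/x ≤ Real.log x := by
  have h := Real.log_le_sub_one_of_pos (show (0:ℝ) < x⁻¹ by positivity)
  rw [Real.log_inv] at h
  have : (0:ℝ) < x := hx
  rw [one_div]
  linarith

private lemma log_ratio_tendsto (c : ℝ) (hc : 0 < c) :
    Filter.Tendsto (fun t : ℝ => Real.log (1 + c * t) / Real.log t) atTop (nhds 1) := by
  have h1 : Filter.Tendsto (fun t : ℝ => Real.log (c + 1/t) * (Real.log t)⁻¹) atTop (nhds 0) := by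
    have ha : Filter.Tendsto (fun t : ℝ => Real.log (c + 1/t)) atTop (nhds (Real.log c)) := by
      have : Filter.Tendsto (fun t : ℝ => c + 1/t) atTop (nhds c) := by
        have h : Filter.Tendsto (fun t : ℝ => t⁻¹) atTop (nhds 0) := tendsto_inv_atTop_zero
        have h2 := (tendsto_const_nhds (x := c) (f := atTop)).add h
        simpa [one_div] using h2
      exact (Real.continuousAt_log (by positivity)).tendsto.comp this
    have hb : Filter.Tendsto (fun t : ℝ => (Real.log t)⁻¹) atTop (nhds 0) :=
      Real.tendsto_log_atTop.inv_tendsto_atTop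
    simpa using ha.mul hb
  have h2 : Filter.Tendsto (fun t : ℝ => 1 + Real.log (c + 1/t) * (Real.log t)⁻¹)
      atTop (nhds 1) := by simpa using tendsto_const_nhds.add h1
  apply h2.congr'
  filter_upwards [eventually_gt_atTop 1] with t ht
  have ht0 : (0:ℝ) < t := lt_trans one_pos ht
  have hlt : Real.log t ≠ 0 := ne_of_gt (Real.log_pos ht)
  have hsum : 0 < c + 1/t := by positivity
  have key : Real.log (1 + c * t) = Real.log t + Real.log (c + 1/t) := by
    rw [← Real.log_mul (ne_of_gt ht0) (ne_of_gt hsum)]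
    congr 1
    field_simp
    ring
  rw [key]
  field_simp

/-- Property 5: with `N(t) = λ·t/(4π)` and
`Ĉ(t) = π·(log(1 + λ·N(t))/λ² + N(t)²·log(N(t)·λ/(1 + N(t)·λ)) + N(t)/λ)`, the pre-log
factor `lim_{t→∞} Ĉ(t)/log t` equals `π/λ²`: there are `π` independent signal dimensions
for every `λ²` of deployed surface-area. -/
theorem prelog_two_dimensional (lam : ℝ) (hlam : 0 < lam) (N : ℝ → ℝ)
    (hN : ∀ t : ℝ, N t = lam * t / (4 * π)) (C : ℝ → ℝ)
    (hC : ∀ t : ℝ, C t =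
      π * (Real.log (1 + lam * N t) / lam ^ 2 +
        (N t) ^ 2 * Real.log (N t * lam / (1 + N t * lam)) + N t / lam)) :
    Filter.Tendsto (fun t : ℝ => C t / Real.log t) atTop (nhds (π / lam ^ 2)) := by
  have hπ : (0:ℝ) < π := Real.pi_pos
  set c : ℝ := lam ^ 2 / (4 * π) with hc
  have hcpos : 0 < c := by positivity
  set h : ℝ → ℝ := fun t =>
    (N t) ^ 2 * Real.log (N t * lam / (1 + N t * lam)) + N t / lam with hh
  -- bounds on h for t > 0
  have hbound : ∀ t : ℝ, 0 < t → 0 ≤ h t ∧ h t ≤ 1 / lam ^ 2 := by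
    intro t ht
    have hNt : 0 < N t := by rw [hN t]; positivity
    set u : ℝ := N t * lam with hu
    have hupos : 0 < u := by positivity
    have h1u : 0 < 1 + u := by linarith
    have hlog1 : Real.log (u / (1 + u)) ≥ -(1/u) := by
      have := one_sub_inv_le_log (show 0 < u / (1+u) by positivity)
      have he : 1 - 1/(u/(1+u)) = -(1/u) := by field_simp; ring
      linarith [he ▸ this]
    have hlog2 : Real.log (u / (1 + u)) ≤ -(1/(1+u)) := by
      have h2 := one_sub_inv_le_log (show 0 < (1+u)/u by positivity)
      have he : 1 - 1/((1+u)/u) = 1/(1+u) := by field_simp; ring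
      rw [he] at h2
      have hlogeq : Real.log ((1+u)/u) = - Real.log (u/(1+u)) := by
        rw [Real.log_div (by positivity) (ne_of_gt hupos),
            Real.log_div (ne_of_gt hupos) (by positivity)]
        ring
      linarith [hlogeq ▸ h2]
    have hNu : N t / lam = (N t)^2 / u := by
      rw [hu]; field_simp
    have hN2 : 0 < (N t)^2 := by positivity
    constructor
    · have : (N t)^2 * Real.log (u/(1+u)) ≥ (N t)^2 * (-(1/u)) :=
        mul_le_mul_of_nonneg_left hlog1 (le_of_lt hN2)
      have : h t ≥ (N t)^2 * (-(1/u)) + (N t)^2 / u := by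
        rw [hh]; simp only [← hu]; rw [hNu]; linarith
      have he : (N t)^2 * (-(1/u)) + (N t)^2 / u = 0 := by ring
      linarith [he ▸ this]
    · have h3 : (N t)^2 * Real.log (u/(1+u)) ≤ (N t)^2 * (-(1/(1+u))) :=
        mul_le_mul_of_nonneg_left hlog2 (le_of_lt hN2)
      have h4 : h t ≤ (N t)^2 * (-(1/(1+u))) + (N t)^2 / u := by
        rw [hh]; simp only [← hu]; rw [hNu]; linarith
      have h5 : (N t)^2 * (-(1/(1+u))) + (N t)^2 / u = (N t)^2 / (u * (1+u)) := by
        field_simp; ring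
    -- (N t)^2/(u*(1+u)) ≤ (N t)^2/u^2 = 1/lam^2
      have h6 : (N t)^2 / (u * (1+u)) ≤ (N t)^2 / u^2 := by
        apply div_le_div_of_nonneg_left (le_of_lt hN2) (by positivity)
        nlinarith
      have h7 : (N t)^2 / u^2 = 1 / lam^2 := by
        rw [hu]; field_simp
      linarith [h5 ▸ h4, h7 ▸ h6]
  -- main term tendsto
  have T1 : Filter.Tendsto (fun t : ℝ => π / lam ^ 2 * (Real.log (1 + lam * N t) / Real.log t))
      atTop (nhds (π / lam ^ 2)) := by
    have base : Filter.Tendsto (fun t : ℝ => π / lam ^ 2 * (Real.log (1 + c * t) / Real.log t))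
        atTop (nhds (π / lam ^ 2)) := by
      simpa using (log_ratio_tendsto c hcpos).const_mul (π / lam ^ 2)
    apply base.congr
    intro t
    congr 3
    rw [hN t, hc]
    field_simp
  -- error term tendsto 0
  have T2 : Filter.Tendsto (fun t : ℝ => π * h t / Real.log t) atTop (nhds 0) := by
    have hupper : Filter.Tendsto (fun t : ℝ => π / lam ^ 2 * (Real.log t)⁻¹) atTop (nhds 0) := by
      simpa using (Real.tendsto_log_atTop.inv_tendsto_atTop).const_mul (π / lam ^ 2)
    apply tendsto_of_tendsto_of_tendsto_of_le_of_le' tendsto_const_nhds hupper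
    · filter_upwards [eventually_gt_atTop 1] with t ht
      have ht0 : (0:ℝ) < t := lt_trans one_pos ht
      have hlogpos : 0 < Real.log t := Real.log_pos ht
      have := (hbound t ht0).1
      positivity
    · filter_upwards [eventually_gt_atTop 1] with t ht
      have ht0 : (0:ℝ) < t := lt_trans one_pos ht
      have hlogpos : 0 < Real.log t := Real.log_pos ht
      have hb := (hbound t ht0).2
      rw [div_le_iff₀ hlogpos] at *
      calc π * h t ≤ π * (1 / lam ^ 2) := by nlinarith
        _ = π / lam ^ 2 := by ring
        _ ≤ π / lam ^ 2 * (Real.log t)⁻¹ * Real.log t := by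
            rw [mul_assoc, inv_mul_cancel₀ (ne_of_gt hlogpos), mul_one]
  have := T1.add T2
  rw [add_zero] at this
  apply this.congr'
  filter_upwards [eventually_gt_atTop 1] with t ht
  rw [hC t, hh]
  ring
end

section
/- Let (Ω, μ) be a measure space with μ(Ω) < ∞, and let h : Ω → ℝ be measurable with 0 ≤ h(ω) ≤ M for all ω and some constant M > 0. Then lim_{x→∞} ( ∫_Ω log(1 + x·h(ω)) dμ(ω) ) / log(x) = μ({ ω : h(ω) > 0 }). -/
open MeasureTheory Real Filter

/-- General pre-log principle: on a finite measure space, for a bounded measurable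
`h ≥ 0`, the ratio `(∫ log(1 + x·h) dμ) / log x` tends, as `x → ∞`, to the measure of
the support `{ω : h ω > 0}`. -/
theorem prelog_principle {Ω : Type*} [MeasurableSpace Ω] (μ : Measure Ω)
    [IsFiniteMeasure μ] (h : Ω → ℝ) (hmeas : Measurable h) (M : ℝ) (hM : 0 < M)
    (hbound : ∀ ω : Ω, 0 ≤ h ω ∧ h ω ≤ M) :
    Filter.Tendsto
      (fun x : ℝ => (∫ ω, Real.log (1 + x * h ω) ∂μ) / Real.log x)
      atTop (nhds ((μ {ω : Ω | 0 < h ω}).toReal)) := by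
  have hS : MeasurableSet {ω : Ω | 0 < h ω} := measurableSet_lt measurable_const hmeas
  set g : Ω → ℝ := Set.indicator {ω : Ω | 0 < h ω} (fun _ => 1) with hg
  have hgint : ∫ ω, g ω ∂μ = (μ {ω : Ω | 0 < h ω}).toReal := by
    rw [hg, MeasureTheory.integral_indicator_const (1:ℝ) hS, smul_eq_mul, mul_one]
    rfl
  rw [← hgint]
  have key : Tendsto (fun x : ℝ => ∫ ω, Real.log (1 + x * h ω) / Real.log x ∂μ)
      atTop (nhds (∫ ω, g ω ∂μ)) := by
    apply MeasureTheory.tendsto_integral_filter_of_dominated_convergence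
        (bound := fun _ => (2 : ℝ))
    · filter_upwards with x
      exact ((((measurable_const.add ((measurable_const.mul hmeas))).log).div
        measurable_const)).aestronglyMeasurable
    · filter_upwards [eventually_ge_atTop (max (Real.exp 1) (1 + M))] with x hx
      have hx1 : Real.exp 1 ≤ x := le_trans (le_max_left _ _) hx
      have hxM : 1 + M ≤ x := le_trans (le_max_right _ _) hx
      have hx0 : (1:ℝ) < x := lt_of_lt_of_le (by linarith [Real.exp_one_gt_d9]) hx1
      have hlogx : 1 ≤ Real.log x := by
        rw [← Real.log_exp 1]; exact Real.log_le_log (Real.exp_pos 1) hx1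
      filter_upwards with ω
      have h0 := (hbound ω).1
      have hMb := (hbound ω).2
      have hnn : 0 ≤ Real.log (1 + x * h ω) := by
        apply Real.log_nonneg; nlinarith
      have hub : Real.log (1 + x * h ω) ≤ 2 * Real.log x := by
        calc Real.log (1 + x * h ω) ≤ Real.log (x * x) := by
              apply Real.log_le_log (by nlinarith)
              nlinarith
          _ = Real.log x + Real.log x := Real.log_mul (by positivity) (by positivity)
          _ ≤ 2 * Real.log x := by linarith
      rw [Real.norm_eq_abs, abs_div, abs_of_nonneg hnn,
        abs_of_nonneg (by linarith : (0:ℝ) ≤ Real.log x)]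
      rw [div_le_iff₀ (by linarith)]
      linarith
    · exact integrable_const 2
    · filter_upwards with ω
      by_cases hω : 0 < h ω
      · have hgω : g ω = 1 := by simp [hg, Set.indicator_of_mem, hω]
        rw [hgω]
        have hrw : ∀ᶠ x : ℝ in atTop,
            Real.log (1 + x * h ω) / Real.log x
              = 1 + Real.log (1 / x + h ω) / Real.log x := by
          filter_upwards [eventually_gt_atTop (1:ℝ)] with x hx
          have hx0 : (0:ℝ) < x := by linarith
          have hlx : Real.log x ≠ 0 := ne_of_gt (Real.log_pos hx)
          have : 1 + x * h ω = x * (1 / x + h ω) := by field_simp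
          rw [this, Real.log_mul (ne_of_gt hx0) (by positivity), add_div,
            div_self hlx]
        rw [tendsto_congr' hrw]
        have h1 : Tendsto (fun x : ℝ => Real.log (1 / x + h ω)) atTop
            (nhds (Real.log (h ω))) := by
          have hbase : Tendsto (fun x : ℝ => 1 / x + h ω) atTop (nhds (0 + h ω)) :=
            (tendsto_inv_atTop_zero.congr fun x => (one_div x).symm).add
              tendsto_const_nhds
          have := (Real.continuousAt_log (ne_of_gt hω)).tendsto.comp
            (by simpa using hbase)
          simpa [Function.comp_def] using this
        have h2 : Tendsto (fun x : ℝ => Real.log (1 / x + h ω) / Real.log x) atTop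
            (nhds 0) := h1.div_atTop Real.tendsto_log_atTop
        have h3 := (tendsto_const_nhds (x := (1:ℝ)) (f := (atTop : Filter ℝ))).add h2
        simpa using h3
      · have h0 : h ω = 0 := le_antisymm (not_lt.mp hω) (hbound ω).1
        have hgω : g ω = 0 := by simp [hg, Set.indicator_of_notMem, hω]
        rw [hgω]
        simp [h0]
  refine key.congr (fun x => ?_)
  rw [MeasureTheory.integral_div]
end

section
/- Let v, w ∈ ℝ² be linearly independent, let L = { m·v + n·w : m, n ∈ ℤ } be the lattice they generate, and let V(L) = { x ∈ ℝ² : ‖x‖ ≤ ‖x − p‖ for every p ∈ L } be its Voronoi cell around the origin (the fundamental cell). If V(L) is contained in the closed Euclidean disc of radius R > 0 centered at the origin, then the covolume |det(v, w)| of the lattice satisfies |det(v, w)| ≤ (3√3/2)·R². -/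
open MeasureTheory Real

lemma sin_bound (a b : ℝ) : Real.sin a + Real.sin b - Real.sin (a+b) ≤ 3 * Real.sqrt 3 / 2 := by
  have hK : (Real.sqrt 3)^2 = 3 := Real.sq_sqrt (by norm_num)
  have hK0 : (0:ℝ) ≤ Real.sqrt 3 := Real.sqrt_nonneg 3
  set s := (a+b)/2 with hs
  set t := (a-b)/2 with ht
  have ha : a = s + t := by rw [hs, ht]; ring
  have hb : b = s - t := by rw [hs, ht]; ring
  have hab : a + b = s + s := by rw [hs]; ring
  have h1 : Real.sin a + Real.sin b = 2 * Real.sin s * Real.cos t := by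
    rw [ha, hb, Real.sin_add, Real.sin_sub]; ring
  have h2 : Real.sin (a+b) = 2 * Real.sin s * Real.cos s := by
    rw [hab, Real.sin_add]; ring
  set S := |Real.sin s| with hSdef
  set C := |Real.cos s| with hCdef
  have hS : S^2 + C^2 = 1 := by rw [hSdef, hCdef, sq_abs, sq_abs]; exact Real.sin_sq_add_cos_sq s
  have hS0 : 0 ≤ S := abs_nonneg _
  have hC0 : 0 ≤ C := abs_nonneg _
  have key : 2 * S * (1 + C) ≤ 3 * Real.sqrt 3 / 2 := by
    nlinarith [sq_nonneg (2*C - 1), sq_nonneg (2*S*(1+C) - 3*Real.sqrt 3/2),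
      mul_nonneg hS0 hC0, sq_nonneg (S - C), sq_nonneg (S + C)]
  have habs : Real.sin a + Real.sin b - Real.sin (a+b) ≤ 2 * S * (1 + C) := by
    rw [h1, h2]
    have h3 : 2 * Real.sin s * Real.cos t - 2 * Real.sin s * Real.cos s
        = 2 * Real.sin s * (Real.cos t - Real.cos s) := by ring
    rw [h3]
    calc 2 * Real.sin s * (Real.cos t - Real.cos s)
        ≤ |2 * Real.sin s * (Real.cos t - Real.cos s)| := le_abs_self _
      _ = 2 * S * |Real.cos t - Real.cos s| := by
          rw [abs_mul, abs_mul, abs_of_nonneg (by norm_num : (0:ℝ) ≤ 2)]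
      _ ≤ 2 * S * (1 + C) := by
          gcongr
          calc |Real.cos t - Real.cos s| ≤ |Real.cos t| + |Real.cos s| := abs_sub _ _
            _ ≤ 1 + C := by gcongr; exact Real.abs_cos_le_one t
  linarith

lemma det_circle (x1 y1 x2 y2 x3 y3 d : ℝ) (hd : 0 < d)
    (h1 : x1^2 + y1^2 = d^2) (h2 : x2^2 + y2^2 = d^2) (h3 : x3^2 + y3^2 = d^2) :
    (x2-x1)*(y3-y1) - (y2-y1)*(x3-x1) ≤ 3 * Real.sqrt 3 / 2 * d^2 := by
  have key : ∀ x y : ℝ, x^2 + y^2 = d^2 → ∃ θ : ℝ, x = d * Real.cos θ ∧ y = d * Real.sin θ := by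
    intro x y h
    have habs : ‖(⟨x, y⟩ : ℂ)‖ = d := by
      rw [Complex.norm_def, Complex.normSq_mk]
      rw [show x*x + y*y = d^2 by nlinarith]
      exact Real.sqrt_sq hd.le
    have hz : (⟨x, y⟩ : ℂ) ≠ 0 := by
      intro h0
      rw [h0] at habs; simp at habs; exact hd.ne' habs.symm
    refine ⟨Complex.arg ⟨x, y⟩, ?_, ?_⟩
    · rw [Complex.cos_arg hz, habs]; field_simp
    · rw [Complex.sin_arg, habs]; field_simp
  obtain ⟨θ1, hx1, hy1⟩ := key x1 y1 h1
  obtain ⟨θ2, hx2, hy2⟩ := key x2 y2 h2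
  obtain ⟨θ3, hx3, hy3⟩ := key x3 y3 h3
  have hsum := sin_bound (θ2 - θ1) (θ3 - θ2)
  have heq : (x2-x1)*(y3-y1) - (y2-y1)*(x3-x1)
      = d^2 * (Real.sin (θ2-θ1) + Real.sin (θ3-θ2) - Real.sin ((θ2-θ1)+(θ3-θ2))) := by
    rw [hx1, hx2, hx3, hy1, hy2, hy3, Real.sin_sub, Real.sin_sub,
      show (θ2-θ1)+(θ3-θ2) = θ3 - θ1 by ring, Real.sin_sub]
    ring
  rw [heq]
  have hd2 : (0:ℝ) ≤ d^2 := sq_nonneg d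
  calc d^2 * (Real.sin (θ2-θ1) + Real.sin (θ3-θ2) - Real.sin ((θ2-θ1)+(θ3-θ2)))
      ≤ d^2 * (3 * Real.sqrt 3 / 2) := mul_le_mul_of_nonneg_left hsum hd2
    _ = 3 * Real.sqrt 3 / 2 * d^2 := by ring

lemma nsq (x : EuclideanSpace ℝ (Fin 2)) : ‖x‖^2 = x 0^2 + x 1^2 := by
  rw [EuclideanSpace.norm_eq, Real.sq_sqrt (by positivity)]
  simp [Fin.sum_univ_two, sq_abs]

lemma norm_eq_of_sq_eq {x : EuclideanSpace ℝ (Fin 2)} {c : ℝ} (hc : 0 ≤ c)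
    (h : ‖x‖^2 = c^2) : ‖x‖ = c := by
  nlinarith [norm_nonneg x]

lemma collin (a b : EuclideanSpace ℝ (Fin 2)) (h : a 0 * b 1 - a 1 * b 0 = 0) (hb : b ≠ 0) :
    ∃ α : ℝ, a = α • b := by
  have hbc : b 0 ≠ 0 ∨ b 1 ≠ 0 := by
    by_contra hc
    push_neg at hc
    exact hb (by ext i; fin_cases i <;> simp [hc.1, hc.2])
  rcases hbc with h0 | h1
  · refine ⟨a 0 / b 0, ?_⟩
    ext i
    fin_cases i <;> simp [PiLp.smul_apply, smul_eq_mul] <;> field_simp <;> nlinarith [h]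
  · refine ⟨a 1 / b 1, ?_⟩
    ext i
    fin_cases i <;> simp [PiLp.smul_apply, smul_eq_mul] <;> field_simp <;> nlinarith [h]

lemma latt_finite (v w : EuclideanSpace ℝ (Fin 2)) (hvw : LinearIndependent ℝ ![v, w])
    (c : EuclideanSpace ℝ (Fin 2)) (r : ℝ) :
    ({q : EuclideanSpace ℝ (Fin 2) | ∃ m n : ℤ, q = m • v + n • w} ∩
      Metric.closedBall c r).Finite := by
  have hcard : Fintype.card (Fin 2) = Module.finrank ℝ (EuclideanSpace ℝ (Fin 2)) := by
    simp [finrank_euclideanSpace_fin]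
  let b : Module.Basis (Fin 2) ℝ (EuclideanSpace ℝ (Fin 2)) :=
    basisOfLinearIndependentOfCardEqFinrank hvw hcard
  have hb : ⇑b = ![v, w] := coe_basisOfLinearIndependentOfCardEqFinrank hvw hcard
  set S : Submodule ℤ (EuclideanSpace ℝ (Fin 2)) := Submodule.span ℤ (Set.range ⇑b) with hS
  have hrange : Set.range ⇑b = {v, w} := by
    rw [hb]
    ext x
    constructor
    · rintro ⟨i, rfl⟩; fin_cases i
      · exact Or.inl (by simp)
      · exact Or.inr (by simp)
    · rintro (rfl | rfl)
      exacts [⟨0, by simp⟩, ⟨1, by simp⟩]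
  have hLS : {q : EuclideanSpace ℝ (Fin 2) | ∃ m n : ℤ, q = m • v + n • w} = (S : Set _) := by
    ext x
    rw [hS, hrange, SetLike.mem_coe, Submodule.mem_span_pair]
    constructor
    · rintro ⟨m, n, rfl⟩; exact ⟨m, n, rfl⟩
    · rintro ⟨m, n, h⟩; exact ⟨m, n, h.symm⟩
  rw [hLS]
  haveI : DiscreteTopology (S : Set (EuclideanSpace ℝ (Fin 2))) :=
    inferInstanceAs (DiscreteTopology S)
  have hclosed : IsClosed (S : Set (EuclideanSpace ℝ (Fin 2))) := by
    have : IsClosed (S.toAddSubgroup : Set (EuclideanSpace ℝ (Fin 2))) :=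
      AddSubgroup.isClosed_of_discrete
    exact this
  have := Metric.finite_isBounded_inter_isClosed (K := Metric.closedBall c r)
    (s := (S : Set (EuclideanSpace ℝ (Fin 2)))) DiscreteTopology.isDiscrete Metric.isBounded_closedBall hclosed
  exact (Set.inter_comm _ _ ▸ this)

set_option maxHeartbeats 1000000 in
/-- Optimality bound for Property 6: if `v, w` are linearly independent vectors of the
Euclidean plane generating the lattice `L = {m·v + n·w : m, n ∈ ℤ}`, and the Voronoi cell
of `L` around the origin is contained in the closed disc of radius `R > 0`, then the
covolume `|det(v, w)|` is at most `(3√3/2)·R²`. -/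
theorem lattice_covolume_bound (v w : EuclideanSpace ℝ (Fin 2))
    (hvw : LinearIndependent ℝ ![v, w]) (R : ℝ) (hR : 0 < R)
    (hVoronoi :
      {x : EuclideanSpace ℝ (Fin 2) |
          ∀ p ∈ {q : EuclideanSpace ℝ (Fin 2) | ∃ m n : ℤ, q = m • v + n • w},
            ‖x‖ ≤ ‖x - p‖} ⊆
        Metric.closedBall (0 : EuclideanSpace ℝ (Fin 2)) R) :
    |v 0 * w 1 - v 1 * w 0| ≤ (3 * Real.sqrt 3 / 2) * R ^ 2 := by
  classical
  set L : Set (EuclideanSpace ℝ (Fin 2)) := {q | ∃ m n : ℤ, q = m • v + n • w} with hLdef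
  have hVor : ∀ x : EuclideanSpace ℝ (Fin 2), (∀ p ∈ L, ‖x‖ ≤ ‖x - p‖) → ‖x‖ ≤ R := by
    intro x hx
    have := hVoronoi hx
    simpa [Metric.mem_closedBall, dist_zero_right] using this
  have hfin : ∀ (c : EuclideanSpace ℝ (Fin 2)) (r : ℝ), (L ∩ Metric.closedBall c r).Finite :=
    fun c r => latt_finite v w hvw c r
  have h0L : (0 : EuclideanSpace ℝ (Fin 2)) ∈ L := ⟨0, 0, by simp⟩
  have hvL : v ∈ L := ⟨1, 0, by simp⟩
  have hv0 : v ≠ 0 := by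
    have := hvw.ne_zero 0
    simpa using this
  -- shortest nonzero lattice vector u
  obtain ⟨u, huL, hu0, hmin⟩ :
      ∃ u ∈ L, u ≠ 0 ∧ ∀ p ∈ L, p ≠ 0 → ‖u‖ ≤ ‖p‖ := by
    set F : Set (EuclideanSpace ℝ (Fin 2)) := (L ∩ Metric.closedBall 0 ‖v‖) \ {0} with hF
    have hFfin : F.Finite := (hfin 0 ‖v‖).subset Set.diff_subset
    have hvF : v ∈ F := ⟨⟨hvL, by simp⟩, by simp [hv0]⟩
    obtain ⟨u, huF, humin⟩ := Set.exists_min_image F (fun p => ‖p‖) hFfin ⟨v, hvF⟩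
    refine ⟨u, huF.1.1, by simpa using huF.2, ?_⟩
    intro p hpL hp0
    by_cases hpb : ‖p‖ ≤ ‖v‖
    · exact humin p ⟨⟨hpL, by simpa [Metric.mem_closedBall, dist_zero_right] using hpb⟩,
        by simp [hp0]⟩
    · have h1 : ‖u‖ ≤ ‖v‖ := by
        have := huF.1.2
        simpa [Metric.mem_closedBall, dist_zero_right] using this
      linarith [not_le.1 hpb]
  set s : ℝ := ‖u‖ with hsdef
  have hs : 0 < s := norm_pos_iff.2 hu0
  have hs2 : s^2 = u 0^2 + u 1^2 := nsq u
  -- the bisector line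
  set nvec : EuclideanSpace ℝ (Fin 2) := (WithLp.equiv 2 (Fin 2 → ℝ)).symm ![-(u 1), u 0]
    with hnvec
  set g : ℝ → EuclideanSpace ℝ (Fin 2) := fun t => (2⁻¹ : ℝ) • u + t • nvec with hg
  have hgcont : Continuous g := by
    apply Continuous.add continuous_const
    exact continuous_id.smul continuous_const
  have hg0 : ∀ t, g t 0 = u 0 / 2 - t * u 1 := by
    intro t
    simp [hg, hnvec, PiLp.add_apply, PiLp.smul_apply, WithLp.equiv_symm_apply, PiLp.toLp_apply, smul_eq_mul]
    ring
  have hg1 : ∀ t, g t 1 = u 1 / 2 + t * u 0 := by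
    intro t
    simp [hg, hnvec, PiLp.add_apply, PiLp.smul_apply, WithLp.equiv_symm_apply, PiLp.toLp_apply, smul_eq_mul]
    ring
  have hgt_sq : ∀ t, ‖g t‖^2 = (1/4 + t^2) * s^2 := by
    intro t
    rw [nsq, hg0, hg1, hs2]; ring
  have hgu : ∀ t, ‖g t - u‖ = ‖g t‖ := by
    intro t
    apply norm_eq_of_sq_eq (norm_nonneg _)
    rw [nsq, nsq]
    simp only [PiLp.sub_apply]
    rw [hg0, hg1]
    ring
  have hmove : ∀ t t' : ℝ, ‖g t' - g t‖^2 = (t' - t)^2 * s^2 := by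
    intro t t'
    rw [nsq]
    simp only [PiLp.sub_apply]
    rw [hg0, hg1, hg0, hg1, hs2]
    ring
  -- the set of parameters where 0 is a nearest lattice point
  set T : Set ℝ := {t | 0 ≤ t ∧ ∀ q ∈ L, ‖g t‖ ≤ ‖g t - q‖} with hT
  have hg0norm : ‖g 0‖ = s / 2 := by
    apply norm_eq_of_sq_eq (by positivity)
    rw [hgt_sq]; ring
  have h0T : (0:ℝ) ∈ T := by
    refine ⟨le_refl 0, ?_⟩
    intro q hq
    by_cases hq0 : q = 0
    · simp [hq0]
    · have h1 : s ≤ ‖q‖ := hmin q hq hq0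
      have h2 : ‖q‖ - ‖g 0‖ ≤ ‖q - g 0‖ := norm_sub_norm_le q (g 0)
      rw [norm_sub_rev] at h2
      rw [hg0norm] at h2 ⊢
      linarith
  have hmemT : ∀ t ∈ T, ‖g t‖ ≤ R := by
    intro t htmem
    exact hVor (g t) htmem.2
  have hTbdd : BddAbove T := by
    refine ⟨R / s, ?_⟩
    intro t htmem
    have h1 : ‖g t‖ ≤ R := hmemT t htmem
    have h2 : (t * s)^2 ≤ ‖g t‖^2 := by rw [hgt_sq]; nlinarith [sq_nonneg s]
    have h3 : 0 ≤ t * s := mul_nonneg htmem.1 hs.le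
    have h4 : t * s ≤ R := by nlinarith [norm_nonneg (g t)]
    rw [le_div_iff₀ hs]
    linarith
  have hTclosed : IsClosed T := by
    have : T = Set.Ici (0:ℝ) ∩ ⋂ q ∈ L, {t : ℝ | ‖g t‖ ≤ ‖g t - q‖} := by
      ext t
      simp [hT, Set.mem_iInter, Set.mem_Ici]
    rw [this]
    exact isClosed_Ici.inter (isClosed_biInter fun q hq =>
      isClosed_le hgcont.norm ((hgcont.sub continuous_const).norm))
  set tst : ℝ := sSup T with htst
  have htT : tst ∈ T := hTclosed.csSup_mem ⟨0, h0T⟩ hTbdd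
  set d : ℝ := ‖g tst‖ with hd
  have hdR : d ≤ R := hmemT tst htT
  have hd0 : 0 < d := by
    have h1 : d^2 = (1/4 + tst^2) * s^2 := hgt_sq tst
    have h2 : 0 ≤ d := norm_nonneg _
    nlinarith [sq_nonneg tst, sq_nonneg s]
  -- existence of a third lattice point at distance d from g tst
  have hthird : ∃ p ∈ L, p ≠ 0 ∧ p ≠ u ∧ ‖g tst - p‖ = d := by
    by_contra hcon
    push_neg at hcon
    -- get a margin δ
    obtain ⟨δ, hδ0, hδR, hδF⟩ :
        ∃ δ : ℝ, 0 < δ ∧ δ ≤ R ∧ ∀ p ∈ L, p ≠ 0 → p ≠ u →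
          dist (g tst) p ≤ 3*R → ‖g tst‖ + 2*δ ≤ ‖g tst - p‖ := by
      set F : Set (EuclideanSpace ℝ (Fin 2)) :=
        (L ∩ Metric.closedBall (g tst) (3*R)) \ {0, u} with hF
      have hFfin : F.Finite := (hfin (g tst) (3*R)).subset Set.diff_subset
      by_cases hFne : F.Nonempty
      · obtain ⟨p₀, hp₀F, hmin₀⟩ := Set.exists_min_image F (fun p => ‖g tst - p‖) hFfin hFne
        have hp₀L : p₀ ∈ L := hp₀F.1.1
        have hp₀ne : p₀ ≠ 0 ∧ p₀ ≠ u := by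
          have := hp₀F.2
          simp at this
          exact this
        have hge : ‖g tst‖ ≤ ‖g tst - p₀‖ := htT.2 p₀ hp₀L
        have hne : ‖g tst - p₀‖ ≠ d := hcon p₀ hp₀L hp₀ne.1 hp₀ne.2
        have hgap : 0 < (‖g tst - p₀‖ - ‖g tst‖) / 2 := by
          rcases lt_or_eq_of_le hge with h | h
          · linarith
          · exact (hne (by rw [← h, hd])).elim
        refine ⟨min R ((‖g tst - p₀‖ - ‖g tst‖) / 2), lt_min hR hgap, min_le_left _ _, ?_⟩
        intro p hpL hp0 hpu hpb
        have hpF : p ∈ F := ⟨⟨hpL, Metric.mem_closedBall'.2 hpb⟩, by simp [hp0, hpu]⟩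
        have h1 := hmin₀ p hpF
        have h2 : min R ((‖g tst - p₀‖ - ‖g tst‖) / 2) ≤ (‖g tst - p₀‖ - ‖g tst‖) / 2 :=
          min_le_right _ _
        linarith
      · refine ⟨R, hR, le_refl R, ?_⟩
        intro p hpL hp0 hpu hpb
        exact absurd ⟨⟨hpL, Metric.mem_closedBall'.2 hpb⟩, by simp [hp0, hpu]⟩
          (fun h => hFne ⟨p, h⟩)
    set t' : ℝ := tst + δ / s with ht'
    have hmove' : ‖g t' - g tst‖ = δ := by
      apply norm_eq_of_sq_eq hδ0.le
      rw [hmove]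
      rw [ht']
      field_simp
      ring
    have htri : ‖g t'‖ ≤ ‖g tst‖ + δ := by
      have h1 : ‖g t'‖ ≤ ‖g tst‖ + ‖g t' - g tst‖ := by
        have := norm_add_le (g tst) (g t' - g tst)
        simpa using this
      rw [hmove'] at h1; exact h1
    have ht'T : t' ∈ T := by
      refine ⟨by rw [ht']; have h2 := div_pos hδ0 hs; linarith [htT.1], ?_⟩
      intro q hq
      by_cases hq0 : q = 0
      · simp [hq0]
      by_cases hqu : q = u
      · rw [hqu, hgu]
      by_cases hqb : dist (g tst) q ≤ 3*R
      · have h1 := hδF q hq hq0 hqu hqb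
        have h2 : ‖g tst - q‖ ≤ ‖g tst - g t'‖ + ‖g t' - q‖ := by
          have := dist_triangle (g tst) (g t') q
          simpa [dist_eq_norm] using this
        rw [norm_sub_rev (g tst) (g t'), hmove'] at h2
        linarith
      · have h1 : 3*R < dist (g tst) q := not_le.1 hqb
        have h2 : dist (g tst) q ≤ dist (g tst) (g t') + dist (g t') q := dist_triangle _ _ _
        have h3 : dist (g tst) (g t') = δ := by
          rw [dist_eq_norm, norm_sub_rev, hmove']
        have h4 : dist (g t') q = ‖g t' - q‖ := dist_eq_norm _ _
        have h5 : ‖g tst‖ ≤ R := hdR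
        linarith
    have hle : t' ≤ tst := le_csSup hTbdd ht'T
    have : 0 < δ / s := div_pos hδ0 hs
    rw [ht'] at hle
    linarith
  obtain ⟨p, hpL, hp0, hpu, hpd⟩ := hthird
  set c0 : ℝ := g tst 0 with hc0
  set c1 : ℝ := g tst 1 with hc1
  have hcd : c0^2 + c1^2 = d^2 := by rw [hc0, hc1, hd, nsq]
  have e2' : (c0 - u 0)^2 + (c1 - u 1)^2 = d^2 := by
    have h := hgu tst
    rw [← hd] at h
    have h2 : ‖g tst - u‖^2 = d^2 := by rw [h]
    rw [nsq] at h2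
    simpa [PiLp.sub_apply, hc0, hc1] using h2
  have e3' : (c0 - p 0)^2 + (c1 - p 1)^2 = d^2 := by
    have h2 : ‖g tst - p‖^2 = d^2 := by rw [hpd]
    rw [nsq] at h2
    simpa [PiLp.sub_apply, hc0, hc1] using h2
  -- the inscribed triangle bound
  have habs : |u 0 * p 1 - u 1 * p 0| ≤ 3 * Real.sqrt 3 / 2 * d^2 := by
    have h1 : (-c0)^2 + (-c1)^2 = d^2 := by linear_combination hcd
    have h2 : (u 0 - c0)^2 + (u 1 - c1)^2 = d^2 := by linear_combination e2'
    have h3 : (p 0 - c0)^2 + (p 1 - c1)^2 = d^2 := by linear_combination e3'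
    have hA := det_circle (-c0) (-c1) (u 0 - c0) (u 1 - c1) (p 0 - c0) (p 1 - c1) d hd0 h1 h2 h3
    have hB := det_circle (-c0) (-c1) (p 0 - c0) (p 1 - c1) (u 0 - c0) (u 1 - c1) d hd0 h1 h3 h2
    have hA' : u 0 * p 1 - u 1 * p 0 ≤ 3 * Real.sqrt 3 / 2 * d^2 := by
      have hexp : (u 0 - c0 - -c0) * (p 1 - c1 - -c1) - (u 1 - c1 - -c1) * (p 0 - c0 - -c0)
          = u 0 * p 1 - u 1 * p 0 := by ring
      rw [← hexp]; exact hA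
    have hB' : p 0 * u 1 - p 1 * u 0 ≤ 3 * Real.sqrt 3 / 2 * d^2 := by
      have hexp : (p 0 - c0 - -c0) * (u 1 - c1 - -c1) - (p 1 - c1 - -c1) * (u 0 - c0 - -c0)
          = p 0 * u 1 - p 1 * u 0 := by ring
      rw [← hexp]; exact hB
    rw [abs_le]
    exact ⟨by linarith, hA'⟩
  -- non-collinearity
  have hupne : u 0 * p 1 - u 1 * p 0 ≠ 0 := by
    intro hzero
    obtain ⟨α, hα⟩ := collin p u (by linarith) hu0
    have hpc0 : p 0 = α * u 0 := by rw [hα]; simp [PiLp.smul_apply, smul_eq_mul]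
    have hpc1 : p 1 = α * u 1 := by rw [hα]; simp [PiLp.smul_apply, smul_eq_mul]
    rw [hpc0, hpc1] at e3'
    have h1' : s^2 = 2*(c0*u 0 + c1*u 1) := by linear_combination (e2' - hcd) + hs2
    have h2' : α^2*s^2 = 2*α*(c0*u 0 + c1*u 1) := by
      linear_combination (e3' - hcd) + α^2 * hs2
    have hzz : s^2 * (α*(α-1)) = 0 := by linear_combination h2' - α * h1'
    have hs2ne : s^2 ≠ 0 := pow_ne_zero 2 hs.ne'
    rcases mul_eq_zero.1 hzz with h | h
    · exact hs2ne h
    rcases mul_eq_zero.1 h with h | h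
    · exact hp0 (by rw [hα, h, zero_smul])
    · have : α = 1 := by linarith
      exact hpu (by rw [hα, this, one_smul])
  -- integer determinant relation
  obtain ⟨m1, n1, hu_eq⟩ := huL
  obtain ⟨m2, n2, hp_eq⟩ := hpL
  have happ : ∀ (m n : ℤ) (i : Fin 2),
      ((m • v + n • w : EuclideanSpace ℝ (Fin 2))) i = (m:ℝ) * v i + (n:ℝ) * w i := by
    intro m n i
    rw [← Int.cast_smul_eq_zsmul ℝ m v, ← Int.cast_smul_eq_zsmul ℝ n w]
    simp [PiLp.add_apply, PiLp.smul_apply, smul_eq_mul]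
  have hdetk : u 0 * p 1 - u 1 * p 0
      = ((m1:ℝ)*(n2:ℝ) - (n1:ℝ)*(m2:ℝ)) * (v 0 * w 1 - v 1 * w 0) := by
    rw [hu_eq, hp_eq, happ, happ, happ, happ]
    ring
  obtain ⟨k, hkcast⟩ : ∃ k : ℤ, ((k:ℝ)) = (m1:ℝ)*(n2:ℝ) - (n1:ℝ)*(m2:ℝ) :=
    ⟨m1*n2 - n1*m2, by push_cast; ring⟩
  rw [← hkcast] at hdetk
  have hkne : (k:ℝ) ≠ 0 := by
    intro h
    exact hupne (by rw [hdetk, h, zero_mul])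
  have hk1 : (1:ℝ) ≤ |(k:ℝ)| := by
    have : k ≠ 0 := fun h => hkne (by exact_mod_cast congrArg (Int.cast : ℤ → ℝ) h)
    have h1 : 1 ≤ |k| := Int.one_le_abs this
    calc (1:ℝ) = ((1:ℤ):ℝ) := by norm_num
      _ ≤ ((|k|:ℤ):ℝ) := by exact_mod_cast h1
      _ = |(k:ℝ)| := by push_cast; rfl
  calc |v 0 * w 1 - v 1 * w 0|
      ≤ |(k:ℝ)| * |v 0 * w 1 - v 1 * w 0| := le_mul_of_one_le_left (abs_nonneg _) hk1
    _ = |u 0 * p 1 - u 1 * p 0| := by rw [← abs_mul, hdetk]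
    _ ≤ 3 * Real.sqrt 3 / 2 * d^2 := habs
    _ ≤ (3 * Real.sqrt 3 / 2) * R^2 := by
        have hdd : d^2 ≤ R^2 := by nlinarith
        have h30 : (0:ℝ) ≤ 3 * Real.sqrt 3 / 2 := by positivity
        nlinarith
end

section
/- Let R > 0 and consider the vectors v = (3R/2, −(√3/2)·R) and w = (0, √3·R) in ℝ², generating the hexagonal lattice L = { m·v + n·w : m, n ∈ ℤ }. Then the Voronoi cell V(L) = { x ∈ ℝ² : ‖x‖ ≤ ‖x − p‖ for every p ∈ L } is contained in the closed Euclidean disc of radius R centered at the origin, and the covolume satisfies |det(v, w)| = (3√3/2)·R². -/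
open MeasureTheory Real

set_option maxHeartbeats 1000000 in
/-- The hexagonal lattice generated by `v = (3R/2, −(√3/2)R)` and `w = (0, √3·R)` has its
Voronoi cell around the origin contained in the closed disc of radius `R`, and attains the
maximal covolume `|det(v, w)| = (3√3/2)·R²`. -/
theorem hexagonal_lattice_optimal (R : ℝ) (hR : 0 < R)
    (v w : EuclideanSpace ℝ (Fin 2))
    (hv : v = ![3 * R / 2, -(Real.sqrt 3 / 2) * R])
    (hw : w = ![0, Real.sqrt 3 * R]) :
    {x : EuclideanSpace ℝ (Fin 2) |
        ∀ p ∈ {q : EuclideanSpace ℝ (Fin 2) | ∃ m n : ℤ, q = m • v + n • w},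
          ‖x‖ ≤ ‖x - p‖} ⊆
      Metric.closedBall (0 : EuclideanSpace ℝ (Fin 2)) R ∧
    |v 0 * w 1 - v 1 * w 0| = (3 * Real.sqrt 3 / 2) * R ^ 2 := by
  have hs : Real.sqrt 3 ^ 2 = 3 := Real.sq_sqrt (by norm_num)
  have hsp : (0:ℝ) < Real.sqrt 3 := Real.sqrt_pos.mpr (by norm_num)
  set s := Real.sqrt 3 with hsdef
  clear_value s
  have hv0 : v 0 = 3 * R / 2 := by rw [hv]; rfl
  have hv1 : v 1 = -(s / 2) * R := by rw [hv]; rfl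
  have hw0 : w 0 = 0 := by rw [hw]; rfl
  have hw1 : w 1 = s * R := by rw [hw]; rfl
  constructor
  · intro x hx
    set a := x 0 with ha
    set b := x 1 with hb
    -- squared-norm comparison extractor
    have key : ∀ p : EuclideanSpace ℝ (Fin 2), ‖x‖ ≤ ‖x - p‖ →
        a ^ 2 + b ^ 2 ≤ (a - p 0) ^ 2 + (b - p 1) ^ 2 := by
      intro p h
      have h1 : ‖x‖ = Real.sqrt (a ^ 2 + b ^ 2) := by
        rw [EuclideanSpace.norm_eq]
        simp [Fin.sum_univ_two, sq_abs, ha, hb]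
      have h2 : ‖x - p‖ = Real.sqrt ((a - p 0) ^ 2 + (b - p 1) ^ 2) := by
        rw [EuclideanSpace.norm_eq]
        simp [Fin.sum_univ_two, sq_abs, ha, hb]
      rw [h1, h2] at h
      exact (Real.sqrt_le_sqrt_iff (by positivity)).mp h
    have hxv := key v (hx v ⟨1, 0, by simp⟩)
    have hxw := key w (hx w ⟨0, 1, by simp⟩)
    have hxvw := key (v + w) (hx (v + w) ⟨1, 1, by simp⟩)
    have hxv' := key (-v) (hx (-v) ⟨-1, 0, by simp⟩)
    have hxw' := key (-w) (hx (-w) ⟨0, -1, by simp⟩)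
    have hxvw' := key (-(v + w)) (hx (-(v + w)) ⟨-1, -1, by simp [neg_add, add_comm]⟩)
    simp only [PiLp.add_apply, PiLp.neg_apply, hv0, hv1, hw0, hw1]
      at hxv hxw hxvw hxv' hxw' hxvw'
    have hnorm : ‖x‖ = Real.sqrt (a ^ 2 + b ^ 2) := by
      rw [EuclideanSpace.norm_eq]
      simp [Fin.sum_univ_two, sq_abs, ha, hb]
    clear_value a b
    -- six linear constraints
    have c1 : 3 * a - s * b ≤ 3 * R := by nlinarith [hxv, hR, hsp]
    have c2 : -(3 * a - s * b) ≤ 3 * R := by nlinarith [hxv', hR, hsp]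
    have c3 : 2 * (s * b) ≤ 3 * R := by nlinarith [hxw, hR, hsp]
    have c4 : -(2 * (s * b)) ≤ 3 * R := by nlinarith [hxw', hR, hsp]
    have c5 : 3 * a + s * b ≤ 3 * R := by nlinarith [hxvw, hR, hsp]
    have c6 : -(3 * a + s * b) ≤ 3 * R := by nlinarith [hxvw', hR, hsp]
    clear key hx hxv hxw hxvw hxv' hxw' hxvw'
    have goal2 : a ^ 2 + b ^ 2 ≤ R ^ 2 := by
      rcases le_total 0 b with hb0 | hb0
      · have hbr : 2 * b ≤ s * R := by nlinarith
        rcases le_total 0 a with ha0 | ha0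
        · nlinarith [mul_nonneg hb0 (by linarith : (0:ℝ) ≤ s * R - 2 * b),
            mul_nonneg (by linarith : (0:ℝ) ≤ 3 * R - s * b - 3 * a)
              (by linarith : (0:ℝ) ≤ 3 * R - s * b + 3 * a)]
        · nlinarith [mul_nonneg hb0 (by linarith : (0:ℝ) ≤ s * R - 2 * b),
            mul_nonneg (by linarith : (0:ℝ) ≤ 3 * R - s * b - 3 * a)
              (by linarith : (0:ℝ) ≤ 3 * R - s * b + 3 * a)]
      · have hbr : -(2 * b) ≤ s * R := by nlinarith
        rcases le_total 0 a with ha0 | ha0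
        · nlinarith [mul_nonneg (by linarith : (0:ℝ) ≤ -b) (by linarith : (0:ℝ) ≤ s * R + 2 * b),
            mul_nonneg (by linarith : (0:ℝ) ≤ 3 * R + s * b - 3 * a)
              (by linarith : (0:ℝ) ≤ 3 * R + s * b + 3 * a)]
        · nlinarith [mul_nonneg (by linarith : (0:ℝ) ≤ -b) (by linarith : (0:ℝ) ≤ s * R + 2 * b),
            mul_nonneg (by linarith : (0:ℝ) ≤ 3 * R + s * b - 3 * a)
              (by linarith : (0:ℝ) ≤ 3 * R + s * b + 3 * a)]
    rw [Metric.mem_closedBall, dist_zero_right, hnorm]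
    calc Real.sqrt (a ^ 2 + b ^ 2) ≤ Real.sqrt (R ^ 2) := Real.sqrt_le_sqrt goal2
      _ = R := Real.sqrt_sq hR.le
  · rw [hv0, hv1, hw0, hw1, mul_zero, sub_zero, abs_of_nonneg (by positivity)]
    ring
end
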